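/- The kernel of ∇_t∨ : Ω^0(T∨,D∨;L∨) → Ω^1(T∨,D∨;L∨) vanishes, and the quotient ℂ-vector space H^1_alg(T∨,D∨;L∨) = Ω^1(T∨,D∨;L∨)/∇_t∨(Ω^0(T∨,D∨;L∨)) has dimension exactly m + 1, for all values of the parameters α_0, …, α_{m+2}. -/

import Mathlib

open Polynomial

noncomputable section

/-- Formal derivative of a rational function over `ℂ`. -/
def ratDeriv (f : RatFunc ℂ) : RatFunc ℂ :=
  (algebraMap (Polynomial ℂ) (RatFunc ℂ) (derivative f.num) *
      algebraMap (Polynomial ℂ) (RatFunc ℂ) f.denom -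
    algebraMap (Polynomial ℂ) (RatFunc ℂ) f.num *
      algebraMap (Polynomial ℂ) (RatFunc ℂ) (derivative f.denom)) /
    algebraMap (Polynomial ℂ) (RatFunc ℂ) f.denom ^ 2

/-- Order of vanishing of a rational function at a point `p ∈ ℂ`. -/
def ordAt (f : RatFunc ℂ) (p : ℂ) : ℤ :=
  (f.num.rootMultiplicity p : ℤ) - (f.denom.rootMultiplicity p : ℤ)

/-- `f` vanishes to order at least `k` at `p` (the zero function counts). -/
def ordGE (f : RatFunc ℂ) (p : ℂ) (k : ℤ) : Prop :=
  f = 0 ∨ k ≤ ordAt f p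

/-- `f` vanishes to order at least `k` at `∞`. -/
def ordInfGE (f : RatFunc ℂ) (k : ℤ) : Prop :=
  f = 0 ∨ k ≤ (f.denom.natDegree : ℤ) - (f.num.natDegree : ℤ)

/-- `f` has no poles in `ℂ` outside the points `x 0, …, x (m+1)`. -/
def NoPolesOutside (m : ℕ) (x : ℕ → ℂ) (f : RatFunc ℂ) : Prop :=
  ∀ p : ℂ, (∀ i ≤ m + 1, p ≠ x i) → ordGE f p 0

/-- The logarithmic derivative `ω = Σ_{i=0}^{m+1} α_i/(t - x_i)` of `u`. -/
def omegaFD (m : ℕ) (x α : ℕ → ℂ) : RatFunc ℂ :=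
  ∑ i ∈ Finset.range (m + 2), RatFunc.C (α i) / (RatFunc.X - RatFunc.C (x i))

/-- The dual twisted differential `∇_t^∨ f = f' - ω f`. -/
def nablaDualFD (m : ℕ) (x α : ℕ → ℂ) (f : RatFunc ℂ) : RatFunc ℂ :=
  ratDeriv f - omegaFD m x α * f

/-- The space `Ω^0(T^∨,D^∨;L^∨)`: rational functions with poles only at the
`x_i`, with `ord_{x_i} f ≥ 1 + α_i` for each `i ∈ I_{D^∨}` (for `i ≤ m` this
means `α_i ∈ {-1,-2,…}`; for `i = m+1, m+2` it means `α_i ∈ {0,-1,-2,…}`). -/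
def OmegaRel0Dual (m : ℕ) (x α : ℕ → ℂ) : Set (RatFunc ℂ) :=
  {f | NoPolesOutside m x f ∧
    (∀ i ≤ m, ∀ n : ℕ, α i = -(n : ℂ) - 1 → ordGE f (x i) (-(n : ℤ))) ∧
    (∀ n : ℕ, α (m + 1) = -(n : ℂ) → ordGE f (x (m + 1)) (1 - (n : ℤ))) ∧
    (∀ n : ℕ, α (m + 2) = -(n : ℂ) → ordInfGE f (1 - (n : ℤ)))}

/-- The space `Ω^1(T^∨,D^∨;L^∨)`: rational functions `g` (thought of as
`g·dt`) with poles only at the `x_i`, with `ord_{x_i} g ≥ α_i` for each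
`i ∈ I_{D^∨}`, `i ≤ m+1`, and `ord_∞ g ≥ 2 + α_{m+2}` when `m+2 ∈ I_{D^∨}`. -/
def OmegaRel1Dual (m : ℕ) (x α : ℕ → ℂ) : Set (RatFunc ℂ) :=
  {f | NoPolesOutside m x f ∧
    (∀ i ≤ m, ∀ n : ℕ, α i = -(n : ℂ) - 1 → ordGE f (x i) (-((n : ℤ) + 1))) ∧
    (∀ n : ℕ, α (m + 1) = -(n : ℂ) → ordGE f (x (m + 1)) (-(n : ℤ))) ∧
    (∀ n : ℕ, α (m + 2) = -(n : ℂ) → ordInfGE f (2 - (n : ℤ)))}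


namespace RD


local notation "ι" => algebraMap (Polynomial ℂ) (RatFunc ℂ)

lemma ι_inj : Function.Injective ι := IsFractionRing.injective _ _

lemma ι_ne (p : Polynomial ℂ) (hp : p ≠ 0) : ι p ≠ 0 := RatFunc.algebraMap_ne_zero hp

lemma ratDeriv_eq (f : RatFunc ℂ) :
    ratDeriv f = ι (derivative f.num * f.denom - f.num * derivative f.denom) / ι (f.denom ^ 2) := by
  simp [ratDeriv, map_mul, map_sub, map_pow]

lemma frac_eq_iff {a b c d : Polynomial ℂ} (hb : b ≠ 0) (hd : d ≠ 0) :
    ι a / ι b = ι c / ι d ↔ a * d = c * b := by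
  rw [div_eq_div_iff (ι_ne b hb) (ι_ne d hd), ← map_mul, ← map_mul]
  exact ⟨fun h => ι_inj h, fun h => congrArg _ h⟩

lemma frac_add (a c : Polynomial ℂ) {b d : Polynomial ℂ} (hb : b ≠ 0) (hd : d ≠ 0) :
    ι a / ι b + ι c / ι d = ι (a * d + b * c) / ι (b * d) := by
  rw [div_add_div _ _ (ι_ne b hb) (ι_ne d hd), ← map_mul, ← map_mul, ← map_mul, ← map_add]

lemma frac_mul (a c : Polynomial ℂ) (b d : Polynomial ℂ) :
    (ι a / ι b) * (ι c / ι d) = ι (a * c) / ι (b * d) := by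
  rw [div_mul_div_comm, ← map_mul, ← map_mul]

lemma ratDeriv_div (p q : Polynomial ℂ) (hq : q ≠ 0) :
    ratDeriv (ι p / ι q) = ι (derivative p * q - p * derivative q) / ι (q ^ 2) := by
  set f := ι p / ι q with hf
  have hd : (f.denom : Polynomial ℂ) ≠ 0 := f.denom_ne_zero
  have hιq : ι q ≠ 0 := ι_ne q hq
  have hιd : ι f.denom ≠ 0 := ι_ne _ hd
  have hnum : ι f.num = f * ι f.denom := ((div_eq_iff hιd).1 (RatFunc.num_div_denom f))
  have h1 : f * ι q = ι p := by rw [hf]; field_simp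
  have hcross : f.num * q = p * f.denom := by
    apply ι_inj
    simp only [map_mul]
    rw [hnum, mul_right_comm, h1]
  have hder := congrArg derivative hcross
  simp only [derivative_mul] at hder
  rw [ratDeriv_eq, frac_eq_iff (pow_ne_zero 2 hd) (pow_ne_zero 2 hq)]
  linear_combination (q * f.denom) * hder - (derivative f.denom * q + derivative q * f.denom) * hcross

lemma ratDeriv_algebraMap (p : Polynomial ℂ) : ratDeriv (ι p) = ι (derivative p) := by
  have := ratDeriv_div p 1 one_ne_zero
  simpa using this

lemma ratDeriv_zero : ratDeriv (0 : RatFunc ℂ) = 0 := by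
  have := ratDeriv_algebraMap 0
  simpa using this

lemma repr_eq (f : RatFunc ℂ) : f = ι f.num / ι f.denom := (RatFunc.num_div_denom f).symm

lemma ratDeriv_add (f g : RatFunc ℂ) : ratDeriv (f + g) = ratDeriv f + ratDeriv g := by
  have key : ∀ (p1 p2 : Polynomial ℂ) {q1 q2 : Polynomial ℂ}, q1 ≠ 0 → q2 ≠ 0 →
      ratDeriv (ι p1 / ι q1 + ι p2 / ι q2) = ratDeriv (ι p1 / ι q1) + ratDeriv (ι p2 / ι q2) := by
    intro p1 p2 q1 q2 h1 h2
    rw [frac_add _ _ h1 h2, ratDeriv_div _ _ (mul_ne_zero h1 h2), ratDeriv_div _ _ h1,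
      ratDeriv_div _ _ h2, frac_add _ _ (pow_ne_zero 2 h1) (pow_ne_zero 2 h2),
      frac_eq_iff (pow_ne_zero 2 (mul_ne_zero h1 h2)) (mul_ne_zero (pow_ne_zero 2 h1) (pow_ne_zero 2 h2))]
    simp only [derivative_mul, derivative_add]
    ring
  have := key f.num g.num f.denom_ne_zero g.denom_ne_zero
  rwa [RatFunc.num_div_denom, RatFunc.num_div_denom] at this

lemma ratDeriv_mul (f g : RatFunc ℂ) : ratDeriv (f * g) = ratDeriv f * g + f * ratDeriv g := by
  have key : ∀ (p1 p2 : Polynomial ℂ) {q1 q2 : Polynomial ℂ}, q1 ≠ 0 → q2 ≠ 0 →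
      ratDeriv ((ι p1 / ι q1) * (ι p2 / ι q2)) =
        ratDeriv (ι p1 / ι q1) * (ι p2 / ι q2) + (ι p1 / ι q1) * ratDeriv (ι p2 / ι q2) := by
    intro p1 p2 q1 q2 h1 h2
    rw [frac_mul, ratDeriv_div _ _ (mul_ne_zero h1 h2), ratDeriv_div _ _ h1, ratDeriv_div _ _ h2,
      frac_mul, frac_mul, frac_add _ _ (mul_ne_zero (pow_ne_zero 2 h1) h2)
        (mul_ne_zero h1 (pow_ne_zero 2 h2)),
      frac_eq_iff (pow_ne_zero 2 (mul_ne_zero h1 h2))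
        (mul_ne_zero (mul_ne_zero (pow_ne_zero 2 h1) h2) (mul_ne_zero h1 (pow_ne_zero 2 h2)))]
    simp only [derivative_mul]
    ring
  have := key f.num g.num f.denom_ne_zero g.denom_ne_zero
  rwa [RatFunc.num_div_denom, RatFunc.num_div_denom] at this

lemma ratDeriv_C (c : ℂ) : ratDeriv (RatFunc.C c) = 0 := by
  rw [← RatFunc.algebraMap_C, ratDeriv_algebraMap]
  simp

lemma ratDeriv_one : ratDeriv (1 : RatFunc ℂ) = 0 := by
  simpa using ratDeriv_C 1

lemma ratDeriv_smul (c : ℂ) (f : RatFunc ℂ) : ratDeriv (c • f) = c • ratDeriv f := by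
  rw [RatFunc.smul_eq_C_mul, ratDeriv_mul, ratDeriv_C, RatFunc.smul_eq_C_mul]
  ring

/-- logarithmic derivative -/
def LD (f : RatFunc ℂ) : RatFunc ℂ := ratDeriv f / f

lemma LD_mul {f g : RatFunc ℂ} (hf : f ≠ 0) (hg : g ≠ 0) : LD (f * g) = LD f + LD g := by
  unfold LD
  rw [ratDeriv_mul]
  field_simp

lemma LD_inv {f : RatFunc ℂ} (hf : f ≠ 0) : LD f⁻¹ = -LD f := by
  have h := ratDeriv_mul f f⁻¹
  rw [mul_inv_cancel₀ hf, ratDeriv_one] at h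
  unfold LD
  have hfi : f⁻¹ ≠ 0 := inv_ne_zero hf
  field_simp
  field_simp at h
  linear_combination -h

lemma LD_pow (f : RatFunc ℂ) (hf : f ≠ 0) (n : ℕ) : LD (f ^ n) = (n : ℂ) • LD f := by
  induction n with
  | zero => simp [LD, ratDeriv_one]
  | succ k ih =>
    rw [pow_succ, LD_mul (pow_ne_zero k hf) hf, ih]
    push_cast
    rw [add_smul, one_smul]

lemma LD_zpow (f : RatFunc ℂ) (hf : f ≠ 0) (z : ℤ) : LD (f ^ z) = (z : ℂ) • LD f := by
  cases z with
  | ofNat n => simpa using LD_pow f hf n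
  | negSucc n =>
    rw [zpow_negSucc, LD_inv (pow_ne_zero _ hf), LD_pow f hf (n+1)]
    have h1 : ((Int.negSucc n : ℤ) : ℂ) = -((n : ℂ) + 1) := by
      push_cast [Int.negSucc_eq]; ring
    rw [h1, ← neg_smul]
    push_cast
    ring_nf

lemma ratDeriv_eq_LD_mul {f : RatFunc ℂ} (hf : f ≠ 0) : ratDeriv f = LD f * f := by
  unfold LD
  field_simp

lemma LD_prod (s : Finset ℕ) (g : ℕ → RatFunc ℂ) (hg : ∀ i ∈ s, g i ≠ 0) :
    LD (∏ i ∈ s, g i) = ∑ i ∈ s, LD (g i) := by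
  classical
  induction s using Finset.induction_on with
  | empty => simp [LD, ratDeriv_one]
  | insert a s hnot ih =>
    rw [Finset.prod_insert hnot, Finset.sum_insert hnot,
      LD_mul (hg a (Finset.mem_insert_self a s)) (Finset.prod_ne_zero_iff.2 fun i hi => hg i (Finset.mem_insert_of_mem hi)),
      ih fun i hi => hg i (Finset.mem_insert_of_mem hi)]



lemma cross_eq {p q : Polynomial ℂ} (hq : q ≠ 0) :
    (ι p / ι q).num * q = p * (ι p / ι q).denom := by
  set f := ι p / ι q with hf
  have hιd : ι f.denom ≠ 0 := ι_ne _ f.denom_ne_zero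
  have hnum : ι f.num = f * ι f.denom := ((div_eq_iff hιd).1 (RatFunc.num_div_denom f))
  have h1 : f * ι q = ι p := by
    rw [hf, div_mul_cancel₀ _ (ι_ne q hq)]
  apply ι_inj
  simp only [map_mul]
  rw [hnum, mul_right_comm, h1]

lemma ordAt_div {p q : Polynomial ℂ} (hp : p ≠ 0) (hq : q ≠ 0) (c : ℂ) :
    ordAt (ι p / ι q) c = (p.rootMultiplicity c : ℤ) - (q.rootMultiplicity c : ℤ) := by
  set f := ι p / ι q with hf
  have hfne : f ≠ 0 := div_ne_zero (ι_ne p hp) (ι_ne q hq)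
  have h := congrArg (fun r => (Polynomial.rootMultiplicity c r : ℤ)) (cross_eq (p := p) hq)
  rw [← hf] at h
  simp only [Polynomial.rootMultiplicity_mul (mul_ne_zero (RatFunc.num_ne_zero hfne) hq),
    Polynomial.rootMultiplicity_mul (mul_ne_zero hp f.denom_ne_zero), Nat.cast_add] at h
  unfold ordAt
  omega

lemma intDegree_div {p q : Polynomial ℂ} (hp : p ≠ 0) (hq : q ≠ 0) :
    RatFunc.intDegree (ι p / ι q) = (p.natDegree : ℤ) - (q.natDegree : ℤ) := by
  set f := ι p / ι q with hf
  have hfne : f ≠ 0 := div_ne_zero (ι_ne p hp) (ι_ne q hq)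
  have h := congrArg (fun r => (Polynomial.natDegree r : ℤ)) (cross_eq (p := p) hq)
  rw [← hf] at h
  simp only [Polynomial.natDegree_mul (RatFunc.num_ne_zero hfne) hq,
    Polynomial.natDegree_mul hp f.denom_ne_zero, Nat.cast_add] at h
  unfold RatFunc.intDegree
  omega

lemma rm_one (c : ℂ) : rootMultiplicity c (1 : Polynomial ℂ) = 0 :=
  Polynomial.rootMultiplicity_eq_zero (by simp [Polynomial.IsRoot])

lemma rm_pow {p : Polynomial ℂ} (hp : p ≠ 0) (n : ℕ) (c : ℂ) :
    rootMultiplicity c (p ^ n) = n * rootMultiplicity c p := by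
  induction n with
  | zero => simpa using rm_one c
  | succ k ih =>
    rw [pow_succ, Polynomial.rootMultiplicity_mul (mul_ne_zero (pow_ne_zero k hp) hp), ih]
    ring

lemma ordAt_algebraMap {p : Polynomial ℂ} (hp : p ≠ 0) (c : ℂ) :
    ordAt (ι p) c = (p.rootMultiplicity c : ℤ) := by
  have := ordAt_div hp one_ne_zero c
  simpa [rm_one] using this

lemma ordAt_mul {f g : RatFunc ℂ} (hf : f ≠ 0) (hg : g ≠ 0) (c : ℂ) :
    ordAt (f * g) c = ordAt f c + ordAt g c := by
  have hfg : f * g = ι (f.num * g.num) / ι (f.denom * g.denom) := by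
    conv_lhs => rw [← RatFunc.num_div_denom f, ← RatFunc.num_div_denom g]
    rw [div_mul_div_comm, ← map_mul, ← map_mul]
  have h1 : ordAt f c = (f.num.rootMultiplicity c : ℤ) - (f.denom.rootMultiplicity c : ℤ) := rfl
  have h2 : ordAt g c = (g.num.rootMultiplicity c : ℤ) - (g.denom.rootMultiplicity c : ℤ) := rfl
  rw [hfg, ordAt_div (mul_ne_zero (RatFunc.num_ne_zero hf) (RatFunc.num_ne_zero hg))
    (mul_ne_zero f.denom_ne_zero g.denom_ne_zero), h1, h2,
    Polynomial.rootMultiplicity_mul (mul_ne_zero (RatFunc.num_ne_zero hf) (RatFunc.num_ne_zero hg)),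
    Polynomial.rootMultiplicity_mul (mul_ne_zero f.denom_ne_zero g.denom_ne_zero)]
  push_cast
  ring

lemma ordAt_zpow_alg {p : Polynomial ℂ} (hp : p ≠ 0) (z : ℤ) (c : ℂ) :
    ordAt ((ι p) ^ z) c = z * (p.rootMultiplicity c : ℤ) := by
  cases z with
  | ofNat n =>
    rw [Int.ofNat_eq_coe, zpow_natCast, ← map_pow, ordAt_algebraMap (pow_ne_zero n hp),
      rm_pow hp]
    push_cast; ring
  | negSucc n =>
    rw [zpow_negSucc, ← map_pow, inv_eq_one_div, show (1 : RatFunc ℂ) = ι 1 from (map_one _).symm,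
      ordAt_div one_ne_zero (pow_ne_zero (n+1) hp), rm_pow hp, rm_one, Int.negSucc_eq]
    push_cast; ring

lemma intDegree_zpow_alg {p : Polynomial ℂ} (hp : p ≠ 0) (z : ℤ) :
    RatFunc.intDegree ((ι p) ^ z) = z * (p.natDegree : ℤ) := by
  cases z with
  | ofNat n =>
    rw [Int.ofNat_eq_coe, zpow_natCast, ← map_pow, RatFunc.intDegree_polynomial,
      Polynomial.natDegree_pow]
    push_cast; ring
  | negSucc n =>
    rw [zpow_negSucc, ← map_pow, inv_eq_one_div, show (1 : RatFunc ℂ) = ι 1 from (map_one _).symm,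
      intDegree_div one_ne_zero (pow_ne_zero (n+1) hp), Polynomial.natDegree_pow,
      Polynomial.natDegree_one, Int.negSucc_eq]
    push_cast; ring

lemma rootMultiplicity_X_sub_C' (a c : ℂ) :
    ((X - C a : Polynomial ℂ).rootMultiplicity c : ℤ) = if c = a then 1 else 0 := by
  classical
  rw [Polynomial.rootMultiplicity_X_sub_C]
  split <;> simp

lemma eq_poly_of_ordAt_nonneg {f : RatFunc ℂ} (hf : f ≠ 0) (h : ∀ p : ℂ, 0 ≤ ordAt f p) :
    f = ι f.num := by
  have hden : f.denom.natDegree = 0 := by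
    by_contra hd
    have hdeg : f.denom.degree ≠ 0 := by
      intro h0
      exact hd (Polynomial.natDegree_eq_zero_iff_degree_le_zero.2 (le_of_eq h0))
    obtain ⟨r, hr⟩ := IsAlgClosed.exists_root f.denom hdeg
    have h1 : 0 < f.denom.rootMultiplicity r :=
      (Polynomial.rootMultiplicity_pos f.denom_ne_zero).2 hr
    have h2 : 0 < f.num.rootMultiplicity r := by
      have := h r
      unfold ordAt at this
      omega
    have hrn : f.num.IsRoot r := (Polynomial.rootMultiplicity_pos (RatFunc.num_ne_zero hf)).1 h2
    obtain ⟨u, v, huv⟩ := RatFunc.isCoprime_num_denom f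
    have := congrArg (Polynomial.eval r) huv
    simp [hrn.eq_zero, hr.eq_zero] at this
  have hmon := RatFunc.monic_denom f
  have hC := Polynomial.eq_C_of_natDegree_eq_zero hden
  have hlc : f.denom.coeff 0 = 1 := by
    have := hmon.leadingCoeff
    rwa [Polynomial.leadingCoeff, hden] at this
  have hone : f.denom = 1 := by rw [hC, hlc, map_one]
  conv_lhs => rw [← RatFunc.num_div_denom f]
  rw [hone, map_one, div_one]


lemma ordAt_prod (s : Finset ℕ) (g : ℕ → RatFunc ℂ) (hg : ∀ i ∈ s, g i ≠ 0) (c : ℂ) :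
    ordAt (∏ i ∈ s, g i) c = ∑ i ∈ s, ordAt (g i) c := by
  classical
  induction s using Finset.induction_on with
  | empty =>
    simp only [Finset.prod_empty, Finset.sum_empty]
    rw [show (1 : RatFunc ℂ) = ι 1 from (map_one _).symm, ordAt_algebraMap one_ne_zero, rm_one]
    simp
  | insert a s hnot ih =>
    rw [Finset.prod_insert hnot, Finset.sum_insert hnot,
      ordAt_mul (hg a (Finset.mem_insert_self a s))
        (Finset.prod_ne_zero_iff.2 fun i hi => hg i (Finset.mem_insert_of_mem hi)),
      ih fun i hi => hg i (Finset.mem_insert_of_mem hi)]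

lemma intDegree_prod (s : Finset ℕ) (g : ℕ → RatFunc ℂ) (hg : ∀ i ∈ s, g i ≠ 0) :
    RatFunc.intDegree (∏ i ∈ s, g i) = ∑ i ∈ s, RatFunc.intDegree (g i) := by
  classical
  induction s using Finset.induction_on with
  | empty => simp [RatFunc.intDegree_one]
  | insert a s hnot ih =>
    rw [Finset.prod_insert hnot, Finset.sum_insert hnot,
      RatFunc.intDegree_mul (hg a (Finset.mem_insert_self a s))
        (Finset.prod_ne_zero_iff.2 fun i hi => hg i (Finset.mem_insert_of_mem hi)),
      ih fun i hi => hg i (Finset.mem_insert_of_mem hi)]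

end RD

namespace RD
section Main

local notation "ι" => algebraMap (Polynomial ℂ) (RatFunc ℂ)

variable (m : ℕ) (x α : ℕ → ℂ)

def pl (i : ℕ) : Polynomial ℂ := X - C (x i)

def PP : Polynomial ℂ := ∏ i ∈ Finset.range (m + 2), pl x i

def UU (b : ℕ → ℤ) : RatFunc ℂ := ∏ i ∈ Finset.range (m + 2), (ι (pl x i)) ^ b i

lemma pl_ne (i : ℕ) : pl x i ≠ 0 := Polynomial.X_sub_C_ne_zero _

lemma pl_monic (i : ℕ) : (pl x i).Monic := Polynomial.monic_X_sub_C _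

lemma PP_ne : PP m x ≠ 0 :=
  Finset.prod_ne_zero_iff.2 fun i _ => pl_ne x i

lemma zpf_ne (b : ℕ → ℤ) (i : ℕ) : (ι (pl x i)) ^ b i ≠ 0 :=
  zpow_ne_zero _ (ι_ne _ (pl_ne x i))

lemma UU_ne (b : ℕ → ℤ) : UU m x b ≠ 0 :=
  Finset.prod_ne_zero_iff.2 fun i _ => zpf_ne x b i

lemma rm_pl (i : ℕ) (c : ℂ) :
    ((pl x i).rootMultiplicity c : ℤ) = if c = x i then 1 else 0 := by
  classical
  rw [pl, Polynomial.rootMultiplicity_X_sub_C]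
  split <;> simp

lemma ordAt_UU_at (hxd : ∀ i ∈ Finset.range (m + 2), ∀ j ∈ Finset.range (m + 2), i ≠ j → x i ≠ x j)
    (b : ℕ → ℤ) {i : ℕ} (hi : i ∈ Finset.range (m + 2)) :
    ordAt (UU m x b) (x i) = b i := by
  rw [UU, ordAt_prod _ _ (fun j _ => zpf_ne x b j)]
  rw [Finset.sum_eq_single i]
  · rw [ordAt_zpow_alg (pl_ne x i), rm_pl, if_pos rfl, mul_one]
  · intro j hj hne
    rw [ordAt_zpow_alg (pl_ne x j), rm_pl, if_neg (hxd i hi j hj (fun h => hne h.symm)), mul_zero]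
  · intro h; exact absurd hi h

lemma ordAt_UU_out (b : ℕ → ℤ) {p : ℂ} (hp : ∀ i ∈ Finset.range (m + 2), p ≠ x i) :
    ordAt (UU m x b) p = 0 := by
  rw [UU, ordAt_prod _ _ (fun j _ => zpf_ne x b j)]
  apply Finset.sum_eq_zero
  intro j hj
  rw [ordAt_zpow_alg (pl_ne x j), rm_pl, if_neg (hp j hj), mul_zero]

lemma intDegree_UU (b : ℕ → ℤ) :
    RatFunc.intDegree (UU m x b) = ∑ i ∈ Finset.range (m + 2), b i := by
  rw [UU, intDegree_prod _ _ (fun j _ => zpf_ne x b j)]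
  apply Finset.sum_congr rfl
  intro j _
  rw [intDegree_zpow_alg (pl_ne x j), pl, Polynomial.natDegree_X_sub_C, Nat.cast_one, mul_one]

end Main
end RD


namespace RD
section Main2

local notation "ι" => algebraMap (Polynomial ℂ) (RatFunc ℂ)

variable (m : ℕ) (x α : ℕ → ℂ)

def PhiL (b : ℕ → ℤ) : Polynomial ℂ →ₗ[ℂ] RatFunc ℂ where
  toFun A := ι A * UU m x b
  map_add' A B := by simp only [map_add, add_mul]
  map_smul' c A := by
    simp only [RingHom.id_apply, Polynomial.smul_eq_C_mul, map_mul, RatFunc.algebraMap_C,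
      RatFunc.smul_eq_C_mul, mul_assoc]

lemma PhiL_apply (b : ℕ → ℤ) (A : Polynomial ℂ) : PhiL m x b A = ι A * UU m x b := rfl

lemma PhiL_inj (b : ℕ → ℤ) : Function.Injective (PhiL m x b) := by
  intro A B h
  simp only [PhiL_apply] at h
  exact ι_inj (mul_right_cancel₀ (UU_ne m x b) h)

def DD (b : ℕ → ℤ) (e : ℤ) : ℤ := -e - ∑ i ∈ Finset.range (m + 2), b i

def Vsp (b : ℕ → ℤ) (e : ℤ) : Submodule ℂ (RatFunc ℂ) :=
  Submodule.map (PhiL m x b) (Polynomial.degreeLT ℂ (DD m b e + 1).toNat)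

lemma UU_neg_mul (b : ℕ → ℤ) : UU m x (fun i => -(b i)) * UU m x b = 1 := by
  rw [UU, UU, ← Finset.prod_mul_distrib]
  apply Finset.prod_eq_one
  intro i _
  rw [← zpow_add₀ (ι_ne _ (pl_ne x i))]
  simp

lemma mem_Vsp_iff (hxd : ∀ i ∈ Finset.range (m + 2), ∀ j ∈ Finset.range (m + 2), i ≠ j → x i ≠ x j)
    (b : ℕ → ℤ) (e : ℤ) (f : RatFunc ℂ) :
    f ∈ Vsp m x b e ↔ (f = 0 ∨
      ((∀ i ∈ Finset.range (m + 2), b i ≤ ordAt f (x i)) ∧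
       (∀ p : ℂ, (∀ i ∈ Finset.range (m + 2), p ≠ x i) → 0 ≤ ordAt f p) ∧
       f.intDegree ≤ -e)) := by
  constructor
  · rintro ⟨A, hA, rfl⟩
    rcases eq_or_ne A 0 with rfl | hA0
    · left; simp [PhiL_apply]
    right
    rw [SetLike.mem_coe, Polynomial.mem_degreeLT] at hA
    have hdeg : (A.natDegree : ℤ) ≤ DD m b e := by
      have h1 : A.natDegree < (DD m b e + 1).toNat := by
        rwa [← Polynomial.natDegree_lt_iff_degree_lt hA0] at hA
      omega
    have hιA : ι A ≠ 0 := ι_ne _ hA0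
    refine ⟨?_, ?_, ?_⟩
    · intro i hi
      rw [PhiL_apply, ordAt_mul hιA (UU_ne m x b), ordAt_UU_at m x hxd b hi,
        ordAt_algebraMap hA0]
      have : (0 : ℤ) ≤ (A.rootMultiplicity (x i) : ℤ) := Int.natCast_nonneg _
      omega
    · intro p hp
      rw [PhiL_apply, ordAt_mul hιA (UU_ne m x b), ordAt_UU_out m x b hp,
        ordAt_algebraMap hA0]
      have : (0 : ℤ) ≤ (A.rootMultiplicity p : ℤ) := Int.natCast_nonneg _
      omega
    · rw [PhiL_apply, RatFunc.intDegree_mul hιA (UU_ne m x b), RatFunc.intDegree_polynomial,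
        intDegree_UU]
      unfold DD at hdeg
      omega
  · rintro (rfl | ⟨h1, h2, h3⟩)
    · exact Submodule.zero_mem _
    rcases eq_or_ne f 0 with rfl | hf0
    · exact Submodule.zero_mem _
    set g := f * UU m x (fun i => -(b i)) with hg
    have hg0 : g ≠ 0 := mul_ne_zero hf0 (UU_ne m x _)
    have hord : ∀ p : ℂ, 0 ≤ ordAt g p := by
      intro p
      by_cases hc : ∃ i ∈ Finset.range (m + 2), p = x i
      · obtain ⟨i, hi, rfl⟩ := hc
        rw [hg, ordAt_mul hf0 (UU_ne m x _), ordAt_UU_at m x hxd _ hi]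
        have := h1 i hi
        omega
      · push_neg at hc
        rw [hg, ordAt_mul hf0 (UU_ne m x _), ordAt_UU_out m x _ hc]
        have := h2 p hc
        omega
    have hpoly := eq_poly_of_ordAt_nonneg hg0 hord
    set A := g.num with hA
    have hA0 : A ≠ 0 := RatFunc.num_ne_zero hg0
    have hfg : f = ι A * UU m x b := by
      rw [← hpoly, hg, mul_assoc, UU_neg_mul, mul_one]
    have hdegg : (A.natDegree : ℤ) ≤ DD m b e := by
      have e1 : RatFunc.intDegree g = (A.natDegree : ℤ) := by
        rw [hpoly, RatFunc.intDegree_polynomial]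
      have e2 : RatFunc.intDegree g = f.intDegree + ∑ i ∈ Finset.range (m + 2), -(b i) := by
        rw [hg, RatFunc.intDegree_mul hf0 (UU_ne m x _), intDegree_UU]
      rw [e1] at e2
      unfold DD
      rw [Finset.sum_neg_distrib] at e2
      omega
    refine Submodule.mem_map.2 ⟨A, ?_, hfg.symm⟩
    rw [Polynomial.mem_degreeLT, ← Polynomial.natDegree_lt_iff_degree_lt hA0]
    omega

lemma Vsp_le (hxd : ∀ i ∈ Finset.range (m + 2), ∀ j ∈ Finset.range (m + 2), i ≠ j → x i ≠ x j)
    {b b' : ℕ → ℤ} {e e' : ℤ}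
    (hb : ∀ i ∈ Finset.range (m + 2), b' i ≤ b i) (he : e' ≤ e) :
    Vsp m x b e ≤ Vsp m x b' e' := by
  intro f hf
  rw [mem_Vsp_iff m x hxd] at hf ⊢
  rcases hf with rfl | ⟨h1, h2, h3⟩
  · left; rfl
  right
  exact ⟨fun i hi => le_trans (hb i hi) (h1 i hi), h2, le_trans h3 (by omega)⟩

end Main2
end RD


namespace RD
section Main3

local notation "ι" => algebraMap (Polynomial ℂ) (RatFunc ℂ)

variable (m : ℕ) (x α : ℕ → ℂ)

def RR (b : ℕ → ℤ) : Polynomial ℂ :=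
  ∑ i ∈ Finset.range (m + 2), C (α i - (b i : ℂ)) * ∏ j ∈ (Finset.range (m + 2)).erase i, pl x j

def TT (b : ℕ → ℤ) (A : Polynomial ℂ) : Polynomial ℂ :=
  derivative A * PP m x - A * RR m x α b

lemma ι_pl (i : ℕ) : ι (pl x i) = RatFunc.X - RatFunc.C (x i) := by
  rw [pl, map_sub, RatFunc.algebraMap_X, RatFunc.algebraMap_C]

lemma omega_eq : omegaFD m x α =
    ∑ i ∈ Finset.range (m + 2), RatFunc.C (α i) * (ι (pl x i))⁻¹ := by
  unfold omegaFD
  apply Finset.sum_congr rfl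
  intro i _
  rw [ι_pl, div_eq_mul_inv]

lemma sumfrac (c : ℕ → ℂ) :
    ∑ i ∈ Finset.range (m + 2), RatFunc.C (c i) * (ι (pl x i))⁻¹ =
      ι (∑ i ∈ Finset.range (m + 2), C (c i) *
          ∏ j ∈ (Finset.range (m + 2)).erase i, pl x j) / ι (PP m x) := by
  rw [eq_div_iff (ι_ne _ (PP_ne m x)), map_sum, Finset.sum_mul]
  apply Finset.sum_congr rfl
  intro i hi
  have hP : pl x i * ∏ j ∈ (Finset.range (m + 2)).erase i, pl x j = PP m x :=
    Finset.mul_prod_erase _ _ hi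
  have h2 : (ι (pl x i))⁻¹ * ι (PP m x) = ι (∏ j ∈ (Finset.range (m + 2)).erase i, pl x j) := by
    rw [← hP, map_mul, inv_mul_cancel_left₀ (ι_ne _ (pl_ne x i))]
  rw [mul_assoc, h2, map_mul, RatFunc.algebraMap_C]

lemma LD_UU (b : ℕ → ℤ) : LD (UU m x b) =
    ∑ i ∈ Finset.range (m + 2), RatFunc.C ((b i : ℂ)) * (ι (pl x i))⁻¹ := by
  rw [UU, LD_prod _ _ (fun i _ => zpf_ne x b i)]
  apply Finset.sum_congr rfl
  intro i _
  rw [LD_zpow _ (ι_ne _ (pl_ne x i)), RatFunc.smul_eq_C_mul]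
  congr 1
  unfold LD
  rw [ratDeriv_algebraMap, pl, derivative_sub, derivative_X, derivative_C, sub_zero, map_one,
    one_div]

lemma UU_sub_one (b : ℕ → ℤ) :
    UU m x (fun i => b i - 1) = UU m x b * (ι (PP m x))⁻¹ := by
  rw [PP, map_prod, ← Finset.prod_inv_distrib, UU, UU, ← Finset.prod_mul_distrib]
  apply Finset.prod_congr rfl
  intro i _
  rw [← zpow_neg_one, ← zpow_add₀ (ι_ne _ (pl_ne x i)), sub_eq_add_neg]

lemma nabla_PhiL (b : ℕ → ℤ) (A : Polynomial ℂ) :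
    nablaDualFD m x α (PhiL m x b A) = PhiL m x (fun i => b i - 1) (TT m x α b A) := by
  rcases eq_or_ne A 0 with rfl | hA0
  · simp only [PhiL_apply, map_zero, zero_mul, TT, derivative_zero]
    unfold nablaDualFD
    rw [ratDeriv_zero]
    simp
  have hU : UU m x b ≠ 0 := UU_ne m x b
  have hιA : ι A ≠ 0 := ι_ne _ hA0
  have hιP : ι (PP m x) ≠ 0 := ι_ne _ (PP_ne m x)
  unfold nablaDualFD
  rw [PhiL_apply, ratDeriv_mul, ratDeriv_algebraMap, ratDeriv_eq_LD_mul hU, LD_UU,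
    PhiL_apply, UU_sub_one, omega_eq]
  have hcomb : ∑ i ∈ Finset.range (m + 2), RatFunc.C ((b i : ℂ)) * (ι (pl x i))⁻¹ -
      ∑ i ∈ Finset.range (m + 2), RatFunc.C (α i) * (ι (pl x i))⁻¹ =
      ι (-(RR m x α b)) / ι (PP m x) := by
    rw [← Finset.sum_sub_distrib]
    have : ∀ i ∈ Finset.range (m + 2),
        RatFunc.C ((b i : ℂ)) * (ι (pl x i))⁻¹ - RatFunc.C (α i) * (ι (pl x i))⁻¹ =
        RatFunc.C ((b i : ℂ) - α i) * (ι (pl x i))⁻¹ := by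
      intro i _
      rw [map_sub, sub_mul]
    rw [Finset.sum_congr rfl this, sumfrac]
    congr 1
    rw [RR, ← Finset.sum_neg_distrib]
    apply congrArg
    apply Finset.sum_congr rfl
    intro i _
    rw [← neg_mul, ← map_neg, neg_sub]
  set Sb := ∑ i ∈ Finset.range (m + 2), RatFunc.C ((b i : ℂ)) * (ι (pl x i))⁻¹ with hSb
  set Sa := ∑ i ∈ Finset.range (m + 2), RatFunc.C (α i) * (ι (pl x i))⁻¹ with hSa
  have hSa' : Sa = Sb - ι (-(RR m x α b)) / ι (PP m x) := by
    rw [← hcomb]; ring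
  rw [hSa', TT, map_sub, map_mul, map_mul, map_neg]
  field_simp
  ring

end Main3
end RD


namespace RD
section Main4

local notation "ι" => algebraMap (Polynomial ℂ) (RatFunc ℂ)

variable (m : ℕ) (x α : ℕ → ℂ)

lemma PP_monic : (PP m x).Monic :=
  Polynomial.monic_prod_of_monic _ _ fun i _ => pl_monic x i

lemma PP_natDegree : (PP m x).natDegree = m + 2 := by
  rw [PP, Polynomial.natDegree_prod _ _ fun i _ => pl_ne x i]
  simp [pl, Polynomial.natDegree_X_sub_C]

lemma Qer_monic (i : ℕ) : (∏ j ∈ (Finset.range (m + 2)).erase i, pl x j).Monic :=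
  Polynomial.monic_prod_of_monic _ _ fun j _ => pl_monic x j

lemma Qer_natDegree {i : ℕ} (hi : i ∈ Finset.range (m + 2)) :
    (∏ j ∈ (Finset.range (m + 2)).erase i, pl x j).natDegree = m + 1 := by
  rw [Polynomial.natDegree_prod _ _ fun j _ => pl_ne x j]
  have : ∀ j ∈ (Finset.range (m + 2)).erase i, (pl x j).natDegree = 1 := by
    intro j _; rw [pl, Polynomial.natDegree_X_sub_C]
  rw [Finset.sum_congr rfl this, Finset.sum_const, Finset.card_erase_of_mem hi,
    Finset.card_range]
  simp

lemma RR_natDegree_le (b : ℕ → ℤ) : (RR m x α b).natDegree ≤ m + 1 := by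
  apply Polynomial.natDegree_sum_le_of_forall_le
  intro i hi
  refine le_trans (Polynomial.natDegree_mul_le) ?_
  rw [Polynomial.natDegree_C, Qer_natDegree m x hi]
  omega

lemma RR_coeff_top (b : ℕ → ℤ) :
    (RR m x α b).coeff (m + 1) = ∑ i ∈ Finset.range (m + 2), (α i - (b i : ℂ)) := by
  rw [RR, Polynomial.finset_sum_coeff]
  apply Finset.sum_congr rfl
  intro i hi
  rw [Polynomial.coeff_C_mul]
  have h1 : (∏ j ∈ (Finset.range (m + 2)).erase i, pl x j).coeff (m + 1) = 1 := by
    have := (Qer_monic m x i).coeff_natDegree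
    rwa [Qer_natDegree m x hi] at this
  rw [h1, mul_one]

lemma PP_eval_zero {i : ℕ} (hi : i ∈ Finset.range (m + 2)) : (PP m x).eval (x i) = 0 := by
  rw [PP, Polynomial.eval_prod]
  apply Finset.prod_eq_zero hi
  simp [pl]

lemma Qer_eval_ne (hxd : ∀ i ∈ Finset.range (m + 2), ∀ j ∈ Finset.range (m + 2), i ≠ j → x i ≠ x j)
    {i : ℕ} (hi : i ∈ Finset.range (m + 2)) :
    (∏ j ∈ (Finset.range (m + 2)).erase i, pl x j).eval (x i) ≠ 0 := by
  rw [Polynomial.eval_prod]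
  rw [Finset.prod_ne_zero_iff]
  intro j hj
  simp only [pl, Polynomial.eval_sub, Polynomial.eval_X, Polynomial.eval_C]
  rw [sub_ne_zero]
  exact hxd i hi j (Finset.mem_of_mem_erase hj) (fun h => (Finset.ne_of_mem_erase hj) h.symm)

lemma RR_eval (hxd : ∀ i ∈ Finset.range (m + 2), ∀ j ∈ Finset.range (m + 2), i ≠ j → x i ≠ x j)
    (b : ℕ → ℤ) {i : ℕ} (hi : i ∈ Finset.range (m + 2)) :
    (RR m x α b).eval (x i) =
      (α i - (b i : ℂ)) * (∏ j ∈ (Finset.range (m + 2)).erase i, pl x j).eval (x i) := by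
  rw [RR, Polynomial.eval_finset_sum]
  rw [Finset.sum_eq_single i]
  · rw [Polynomial.eval_mul, Polynomial.eval_C]
  · intro j hj hne
    rw [Polynomial.eval_mul, Polynomial.eval_prod]
    have hmem : i ∈ (Finset.range (m + 2)).erase j := Finset.mem_erase.2 ⟨fun h => hne h.symm, hi⟩
    rw [Finset.prod_eq_zero hmem (by simp [pl])]
    ring
  · intro h; exact absurd hi h

lemma TT_factor (hxd : ∀ i ∈ Finset.range (m + 2), ∀ j ∈ Finset.range (m + 2), i ≠ j → x i ≠ x j)
    (b : ℕ → ℤ) {i : ℕ} (hi : i ∈ Finset.range (m + 2)) {A : Polynomial ℂ} (hA0 : A ≠ 0)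
    (hres : α i ≠ (A.rootMultiplicity (x i) : ℂ) + (b i : ℂ)) :
    TT m x α b A ≠ 0 ∧ (TT m x α b A).rootMultiplicity (x i) = A.rootMultiplicity (x i) := by
  classical
  obtain ⟨B, hAB, hBnd⟩ := A.exists_eq_pow_rootMultiplicity_mul_and_not_dvd hA0 (x i)
  have hBev : B.eval (x i) ≠ 0 := fun h => hBnd (Polynomial.dvd_iff_isRoot.2 h)
  generalize hgen : A.rootMultiplicity (x i) = r at hAB hres ⊢
  set Pi := ∏ j ∈ (Finset.range (m + 2)).erase i, pl x j with hPi
  have hPsplit : PP m x = pl x i * Pi := (Finset.mul_prod_erase _ _ hi).symm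
  have hPiev : Pi.eval (x i) ≠ 0 := Qer_eval_ne m x hxd hi
  set W := C (r : ℂ) * B * Pi + derivative B * PP m x - B * RR m x α b with hW
  have hApow : derivative A * PP m x = (pl x i) ^ r * (C (r : ℂ) * B * Pi + derivative B * PP m x) := by
    rcases Nat.eq_zero_or_pos r with hr0 | hrpos
    · rw [hr0] at hAB ⊢
      simp only [pow_zero, one_mul, Nat.cast_zero, map_zero, zero_mul] at hAB ⊢
      rw [hAB, hPsplit]
      ring
    · obtain ⟨s, rfl⟩ : ∃ s, r = s + 1 := ⟨r - 1, by omega⟩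
      rw [hAB, hPsplit, Polynomial.derivative_mul, Polynomial.derivative_pow, pl,
        Polynomial.derivative_X_sub_C]
      push_cast
      ring_nf
  have hTT : TT m x α b A = (pl x i) ^ r * W := by
    rw [show (X - C (x i)) = pl x i from rfl] at hAB
    rw [TT, hApow, hW, hAB]
    ring
  have hWev : W.eval (x i) = B.eval (x i) * Pi.eval (x i) * ((r : ℂ) - (α i - (b i : ℂ))) := by
    rw [hW]
    simp only [Polynomial.eval_sub, Polynomial.eval_add, Polynomial.eval_mul, Polynomial.eval_C]
    rw [PP_eval_zero m x hi, RR_eval m x α hxd b hi, ← hPi]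
    ring
  have hfac : ((r : ℂ) - (α i - (b i : ℂ))) ≠ 0 := by
    intro h
    apply hres
    have : α i = (r : ℂ) + (b i : ℂ) := by linear_combination -h
    exact this
  have hWev0 : W.eval (x i) ≠ 0 := by
    rw [hWev]
    exact mul_ne_zero (mul_ne_zero hBev hPiev) hfac
  have hW0 : W ≠ 0 := fun h => hWev0 (by rw [h]; simp)
  have hTT0 : TT m x α b A ≠ 0 := by
    rw [hTT]
    exact mul_ne_zero (pow_ne_zero _ (pl_ne x i)) hW0
  refine ⟨hTT0, ?_⟩
  rw [hTT, Polynomial.rootMultiplicity_mul (by rw [← hTT]; exact hTT0), rm_pow (pl_ne x i),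
    Polynomial.rootMultiplicity_eq_zero (fun h => hWev0 h), pl,
    Polynomial.rootMultiplicity_X_sub_C_self]
  omega

lemma TT_coeff_top (b : ℕ → ℤ) {A : Polynomial ℂ} (hA0 : A ≠ 0) :
    (TT m x α b A).natDegree ≤ A.natDegree + m + 1 ∧
    (TT m x α b A).coeff (A.natDegree + m + 1) =
      A.leadingCoeff * ((A.natDegree : ℂ) - ∑ i ∈ Finset.range (m + 2), (α i - (b i : ℂ))) := by
  set d := A.natDegree with hd
  set γ := ∑ i ∈ Finset.range (m + 2), (α i - (b i : ℂ)) with hγ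
  have hARdeg : (A * RR m x α b).natDegree ≤ d + m + 1 := by
    refine le_trans Polynomial.natDegree_mul_le ?_
    have := RR_natDegree_le m x α b
    omega
  have hARcoeff : (A * RR m x α b).coeff (d + m + 1) = A.leadingCoeff * γ := by
    have h1 : d + m + 1 = d + (m + 1) := by omega
    rw [h1, Polynomial.coeff_mul_add_eq_of_natDegree_le le_rfl (RR_natDegree_le m x α b),
      RR_coeff_top, Polynomial.leadingCoeff]
  rcases Nat.eq_zero_or_pos d with hd0 | hdpos
  · have hdeg0 : A.natDegree = 0 := by omega
    have hAC : A = C (A.coeff 0) := Polynomial.eq_C_of_natDegree_eq_zero hdeg0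
    have hder : derivative A = 0 := by rw [hAC]; exact Polynomial.derivative_C
    have hcast : ((d : ℕ) : ℂ) = 0 := by exact_mod_cast hd0
    constructor
    · rw [TT, hder, zero_mul, zero_sub]
      rw [Polynomial.natDegree_neg]
      exact hARdeg
    · rw [TT, hder, zero_mul, zero_sub, Polynomial.coeff_neg, hARcoeff, hcast]
      ring
  · have hA'deg : (derivative A).natDegree ≤ d - 1 := Polynomial.natDegree_derivative_le A
    have hA'Pdeg : (derivative A * PP m x).natDegree ≤ d + m + 1 := by
      refine le_trans Polynomial.natDegree_mul_le ?_
      have := PP_natDegree m x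
      omega
    have hA'Pcoeff : (derivative A * PP m x).coeff (d + m + 1) = A.leadingCoeff * (d : ℂ) := by
      have h1 : d + m + 1 = (d - 1) + (m + 2) := by omega
      rw [h1, Polynomial.coeff_mul_add_eq_of_natDegree_le hA'deg (le_of_eq (PP_natDegree m x)),
        Polynomial.coeff_derivative]
      have h2 : d - 1 + 1 = d := by omega
      rw [h2]
      have h3 : (PP m x).coeff (m + 2) = 1 := by
        have := (PP_monic m x).coeff_natDegree
        rwa [PP_natDegree m x] at this
      rw [h3, Polynomial.leadingCoeff, ← hd]
      rw [Nat.cast_sub (by omega : 1 ≤ d)]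
      push_cast
      ring
    constructor
    · rw [TT]
      refine le_trans (Polynomial.natDegree_sub_le _ _) ?_
      omega
    · rw [TT, Polynomial.coeff_sub, hA'Pcoeff, hARcoeff]
      ring

end Main4
end RD


namespace RD
section Main5

local notation "ι" => algebraMap (Polynomial ℂ) (RatFunc ℂ)

variable (m : ℕ) (x α : ℕ → ℂ)

def res0 (α : ℕ → ℂ) (i : ℕ) : Prop := ∃ n : ℕ, α i = -(n : ℂ) - 1

def resN (α : ℕ → ℂ) (i : ℕ) : Prop := ∃ n : ℕ, α i = -(n : ℂ)

open Classical in
noncomputable def bN (m : ℕ) (α : ℕ → ℂ) (N : ℕ) (i : ℕ) : ℤ :=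
  if i = m + 1 then (if h : resN α (m + 1) then 1 - (h.choose : ℤ) else -(N : ℤ))
  else (if h : res0 α i then -(h.choose : ℤ) else -(N : ℤ))

open Classical in
noncomputable def eN (m : ℕ) (α : ℕ → ℂ) (N : ℕ) : ℤ :=
  if h : resN α (m + 2) then 1 - (h.choose : ℤ) else -(N : ℤ)

lemma res0_unique {i a b : ℕ} (ha : α i = -(a : ℂ) - 1) (hb : α i = -(b : ℂ) - 1) : a = b := by
  have : (a : ℂ) = (b : ℂ) := by rw [ha] at hb; linear_combination -hb
  exact_mod_cast this

lemma resN_unique {i a b : ℕ} (ha : α i = -(a : ℂ)) (hb : α i = -(b : ℂ)) : a = b := by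
  have : (a : ℂ) = (b : ℂ) := by rw [ha] at hb; linear_combination -hb
  exact_mod_cast this

lemma bN_res0 {N i n : ℕ} (hi : i ≤ m) (hn : α i = -(n : ℂ) - 1) :
    bN m α N i = -(n : ℤ) := by
  have hne : i ≠ m + 1 := by omega
  have hres : res0 α i := ⟨n, hn⟩
  rw [bN, if_neg hne, dif_pos hres]
  have := res0_unique α (hres.choose_spec) hn
  omega

lemma bN_nonres0 {N i : ℕ} (hi : i ≤ m) (h : ¬ res0 α i) : bN m α N i = -(N : ℤ) := by
  have hne : i ≠ m + 1 := by omega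
  rw [bN, if_neg hne, dif_neg h]

lemma bN_resN1 {N n : ℕ} (hn : α (m + 1) = -(n : ℂ)) : bN m α N (m + 1) = 1 - (n : ℤ) := by
  have hres : resN α (m + 1) := ⟨n, hn⟩
  rw [bN, if_pos rfl, dif_pos hres]
  have := resN_unique α (hres.choose_spec) hn
  omega

lemma bN_nonresN1 {N : ℕ} (h : ¬ resN α (m + 1)) : bN m α N (m + 1) = -(N : ℤ) := by
  rw [bN, if_pos rfl, dif_neg h]

lemma eN_res {N n : ℕ} (hn : α (m + 2) = -(n : ℂ)) : eN m α N = 1 - (n : ℤ) := by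
  have hres : resN α (m + 2) := ⟨n, hn⟩
  rw [eN, dif_pos hres]
  have := resN_unique α (hres.choose_spec) hn
  omega

lemma eN_nonres {N : ℕ} (h : ¬ resN α (m + 2)) : eN m α N = -(N : ℤ) := by
  rw [eN, dif_neg h]

lemma ordInfGE_iff (f : RatFunc ℂ) (k : ℤ) : ordInfGE f k ↔ (f = 0 ∨ k ≤ -f.intDegree) := by
  unfold ordInfGE RatFunc.intDegree
  constructor
  · rintro (h | h)
    · exact Or.inl h
    · right; omega
  · rintro (h | h)
    · exact Or.inl h
    · right; omega

/-- the two truncated spaces -/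
noncomputable def V0 (N : ℕ) : Submodule ℂ (RatFunc ℂ) := Vsp m x (bN m α N) (eN m α N)

noncomputable def V1 (N : ℕ) : Submodule ℂ (RatFunc ℂ) :=
  Vsp m x (fun i => bN m α N i - 1) (eN m α N + 1)

lemma bN_mono {N N' : ℕ} (h : N ≤ N') (i : ℕ) : bN m α N' i ≤ bN m α N i := by
  by_cases hi : i = m + 1
  · subst hi
    by_cases hr : resN α (m + 1)
    · obtain ⟨n, hn⟩ := hr
      rw [bN_resN1 m α hn, bN_resN1 m α hn]
    · rw [bN_nonresN1 m α hr, bN_nonresN1 m α hr]; omega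
  · rw [bN, if_neg hi, bN, if_neg hi]
    by_cases hr : res0 α i
    · rw [dif_pos hr, dif_pos hr]
    · rw [dif_neg hr, dif_neg hr]; omega

lemma eN_mono {N N' : ℕ} (h : N ≤ N') : eN m α N' ≤ eN m α N := by
  by_cases hr : resN α (m + 2)
  · obtain ⟨n, hn⟩ := hr
    rw [eN_res m α hn, eN_res m α hn]
  · rw [eN_nonres m α hr, eN_nonres m α hr]; omega

lemma V0_mono (hxd : ∀ i ∈ Finset.range (m + 2), ∀ j ∈ Finset.range (m + 2), i ≠ j → x i ≠ x j)
    {N N' : ℕ} (h : N ≤ N') : V0 m x α N ≤ V0 m x α N' :=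
  Vsp_le m x hxd (fun i _ => bN_mono m α h i) (eN_mono m α h)

lemma V1_mono (hxd : ∀ i ∈ Finset.range (m + 2), ∀ j ∈ Finset.range (m + 2), i ≠ j → x i ≠ x j)
    {N N' : ℕ} (h : N ≤ N') : V1 m x α N ≤ V1 m x α N' :=
  Vsp_le m x hxd (fun i _ => by have := bN_mono m α h i; omega) (by have := eN_mono m α h; omega)

lemma V0_subset_Omega0
    (hxd : ∀ i ∈ Finset.range (m + 2), ∀ j ∈ Finset.range (m + 2), i ≠ j → x i ≠ x j)
    (N : ℕ) {f : RatFunc ℂ} (hf : f ∈ V0 m x α N) : f ∈ OmegaRel0Dual m x α := by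
  rw [V0, mem_Vsp_iff m x hxd] at hf
  rcases hf with rfl | ⟨h1, h2, h3⟩
  · exact ⟨fun p _ => Or.inl rfl, fun i _ n _ => Or.inl rfl, fun n _ => Or.inl rfl,
      fun n _ => Or.inl rfl⟩
  refine ⟨?_, ?_, ?_, ?_⟩
  · intro p hp
    right
    exact h2 p (fun i hi => hp i (by simp at hi; omega))
  · intro i hi n hn
    right
    have hb := h1 i (by simp; omega)
    rw [bN_res0 m α hi hn] at hb
    exact hb
  · intro n hn
    right
    have hb := h1 (m + 1) (by simp)
    rw [bN_resN1 m α hn] at hb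
    exact hb
  · intro n hn
    rw [ordInfGE_iff]
    right
    rw [eN_res m α hn] at h3
    omega

lemma V1_subset_Omega1
    (hxd : ∀ i ∈ Finset.range (m + 2), ∀ j ∈ Finset.range (m + 2), i ≠ j → x i ≠ x j)
    (N : ℕ) {f : RatFunc ℂ} (hf : f ∈ V1 m x α N) : f ∈ OmegaRel1Dual m x α := by
  rw [V1, mem_Vsp_iff m x hxd] at hf
  rcases hf with rfl | ⟨h1, h2, h3⟩
  · exact ⟨fun p _ => Or.inl rfl, fun i _ n _ => Or.inl rfl, fun n _ => Or.inl rfl,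
      fun n _ => Or.inl rfl⟩
  refine ⟨?_, ?_, ?_, ?_⟩
  · intro p hp
    right
    exact h2 p (fun i hi => hp i (by simp at hi; omega))
  · intro i hi n hn
    right
    have hb := h1 i (by simp; omega)
    rw [bN_res0 m α hi hn] at hb
    omega
  · intro n hn
    right
    have hb := h1 (m + 1) (by simp)
    rw [bN_resN1 m α hn] at hb
    omega
  · intro n hn
    rw [ordInfGE_iff]
    right
    rw [eN_res m α hn] at h3
    omega

lemma Omega0_subset
    (hxd : ∀ i ∈ Finset.range (m + 2), ∀ j ∈ Finset.range (m + 2), i ≠ j → x i ≠ x j)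
    {f : RatFunc ℂ} (hf : f ∈ OmegaRel0Dual m x α) (N0 : ℕ) :
    ∃ N ≥ N0, f ∈ V0 m x α N := by
  rcases eq_or_ne f 0 with rfl | hf0
  · exact ⟨N0, le_rfl, Submodule.zero_mem _⟩
  obtain ⟨hnp, hres0, hres1, hres2⟩ := hf
  set N : ℕ := N0 + (∑ i ∈ Finset.range (m + 2), (ordAt f (x i)).natAbs) +
    f.intDegree.natAbs with hN
  refine ⟨N, by omega, ?_⟩
  have hbound : ∀ i ∈ Finset.range (m + 2), (ordAt f (x i)).natAbs ≤ N := by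
    intro i hi
    have : (ordAt f (x i)).natAbs ≤ ∑ j ∈ Finset.range (m + 2), (ordAt f (x j)).natAbs :=
      Finset.single_le_sum (f := fun j => (ordAt f (x j)).natAbs) (fun j _ => Nat.zero_le _) hi
    omega
  rw [V0, mem_Vsp_iff m x hxd]
  right
  refine ⟨?_, ?_, ?_⟩
  · intro i hi
    by_cases him : i = m + 1
    · subst him
      by_cases hr : resN α (m + 1)
      · obtain ⟨n, hn⟩ := hr
        rw [bN_resN1 m α hn]
        rcases hres1 n hn with h | h
        · exact absurd h hf0
        · exact h
      · rw [bN_nonresN1 m α hr]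
        have := hbound (m + 1) hi
        omega
    · have him' : i ≤ m := by simp at hi; omega
      by_cases hr : res0 α i
      · obtain ⟨n, hn⟩ := hr
        rw [bN_res0 m α him' hn]
        rcases hres0 i him' n hn with h | h
        · exact absurd h hf0
        · exact h
      · rw [bN_nonres0 m α him' hr]
        have := hbound i hi
        omega
  · intro p hp
    rcases hnp p (fun i hi => hp i (by simp; omega)) with h | h
    · exact absurd h hf0
    · exact h
  · by_cases hr : resN α (m + 2)
    · obtain ⟨n, hn⟩ := hr
      rw [eN_res m α hn]
      rcases (ordInfGE_iff f _).1 (hres2 n hn) with h | h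
      · exact absurd h hf0
      · omega
    · rw [eN_nonres m α hr]
      omega

lemma Omega1_subset
    (hxd : ∀ i ∈ Finset.range (m + 2), ∀ j ∈ Finset.range (m + 2), i ≠ j → x i ≠ x j)
    {f : RatFunc ℂ} (hf : f ∈ OmegaRel1Dual m x α) (N0 : ℕ) :
    ∃ N ≥ N0, f ∈ V1 m x α N := by
  rcases eq_or_ne f 0 with rfl | hf0
  · exact ⟨N0, le_rfl, Submodule.zero_mem _⟩
  obtain ⟨hnp, hres0, hres1, hres2⟩ := hf
  set N : ℕ := N0 + (∑ i ∈ Finset.range (m + 2), (ordAt f (x i)).natAbs) +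
    f.intDegree.natAbs + 1 with hN
  refine ⟨N, by omega, ?_⟩
  have hbound : ∀ i ∈ Finset.range (m + 2), (ordAt f (x i)).natAbs ≤ N := by
    intro i hi
    have : (ordAt f (x i)).natAbs ≤ ∑ j ∈ Finset.range (m + 2), (ordAt f (x j)).natAbs :=
      Finset.single_le_sum (f := fun j => (ordAt f (x j)).natAbs) (fun j _ => Nat.zero_le _) hi
    omega
  rw [V1, mem_Vsp_iff m x hxd]
  right
  refine ⟨?_, ?_, ?_⟩
  · intro i hi
    by_cases him : i = m + 1
    · subst him
      by_cases hr : resN α (m + 1)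
      · obtain ⟨n, hn⟩ := hr
        rw [bN_resN1 m α hn]
        rcases hres1 n hn with h | h
        · exact absurd h hf0
        · omega
      · rw [bN_nonresN1 m α hr]
        have := hbound (m + 1) hi
        omega
    · have him' : i ≤ m := by simp at hi; omega
      by_cases hr : res0 α i
      · obtain ⟨n, hn⟩ := hr
        rw [bN_res0 m α him' hn]
        rcases hres0 i him' n hn with h | h
        · exact absurd h hf0
        · omega
      · rw [bN_nonres0 m α him' hr]
        have := hbound i hi
        omega
  · intro p hp
    rcases hnp p (fun i hi => hp i (by simp; omega)) with h | h
    · exact absurd h hf0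
    · exact h
  · by_cases hr : resN α (m + 2)
    · obtain ⟨n, hn⟩ := hr
      rw [eN_res m α hn]
      rcases (ordInfGE_iff f _).1 (hres2 n hn) with h | h
      · exact absurd h hf0
      · omega
    · rw [eN_nonres m α hr]
      omega

end Main5
end RD


namespace RD
section Main6

local notation "ι" => algebraMap (Polynomial ℂ) (RatFunc ℂ)

variable (m : ℕ) (x α : ℕ → ℂ)

noncomputable def nablaL : RatFunc ℂ →ₗ[ℂ] RatFunc ℂ where
  toFun f := nablaDualFD m x α f
  map_add' f g := by
    show ratDeriv (f + g) - omegaFD m x α * (f + g) =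
      (ratDeriv f - omegaFD m x α * f) + (ratDeriv g - omegaFD m x α * g)
    rw [ratDeriv_add]
    ring
  map_smul' c f := by
    show ratDeriv (c • f) - omegaFD m x α * (c • f) = c • (ratDeriv f - omegaFD m x α * f)
    rw [ratDeriv_smul, RatFunc.smul_eq_C_mul, RatFunc.smul_eq_C_mul, RatFunc.smul_eq_C_mul]
    ring

lemma nablaL_apply (f : RatFunc ℂ) : nablaL m x α f = nablaDualFD m x α f := rfl

lemma PhiL_ne (b : ℕ → ℤ) {A : Polynomial ℂ} (hA0 : A ≠ 0) : PhiL m x b A ≠ 0 := by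
  rw [PhiL_apply]
  exact mul_ne_zero (ι_ne _ hA0) (UU_ne m x b)

lemma ordAt_PhiL (hxd : ∀ i ∈ Finset.range (m + 2), ∀ j ∈ Finset.range (m + 2), i ≠ j → x i ≠ x j)
    (b : ℕ → ℤ) {A : Polynomial ℂ} (hA0 : A ≠ 0) {i : ℕ} (hi : i ∈ Finset.range (m + 2)) :
    ordAt (PhiL m x b A) (x i) = (A.rootMultiplicity (x i) : ℤ) + b i := by
  rw [PhiL_apply, ordAt_mul (ι_ne _ hA0) (UU_ne m x b), ordAt_UU_at m x hxd b hi,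
    ordAt_algebraMap hA0]

lemma intDeg_PhiL (b : ℕ → ℤ) {A : Polynomial ℂ} (hA0 : A ≠ 0) :
    (PhiL m x b A).intDegree = (A.natDegree : ℤ) + ∑ i ∈ Finset.range (m + 2), b i := by
  rw [PhiL_apply, RatFunc.intDegree_mul (ι_ne _ hA0) (UU_ne m x b),
    RatFunc.intDegree_polynomial, intDegree_UU]

lemma sum_sub_one (b : ℕ → ℤ) :
    ∑ i ∈ Finset.range (m + 2), (b i - 1) =
      (∑ i ∈ Finset.range (m + 2), b i) - (m + 2) := by
  rw [Finset.sum_sub_distrib, Finset.sum_const, Finset.card_range]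
  push_cast
  ring

lemma DD_shift (b : ℕ → ℤ) (e : ℤ) :
    DD m (fun i => b i - 1) (e + 1) = DD m b e + (m + 1) := by
  unfold DD
  rw [sum_sub_one]
  push_cast
  ring

lemma res0_of_negint {i : ℕ} {k : ℤ} (hk : k ≤ -1) (h : α i = (k : ℂ)) : res0 α i := by
  refine ⟨(-k - 1).toNat, ?_⟩
  rw [h]
  have h2 : ((-k - 1).toNat : ℤ) = -k - 1 := Int.toNat_of_nonneg (by omega)
  have h3 : (((-k - 1).toNat : ℕ) : ℂ) = -(k : ℂ) - 1 := by
    calc (((-k - 1).toNat : ℕ) : ℂ) = ((((-k - 1).toNat : ℕ) : ℤ) : ℂ) := by push_cast; ring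
    _ = ((-k - 1 : ℤ) : ℂ) := by rw [h2]
    _ = -(k : ℂ) - 1 := by push_cast; ring
  rw [h3]
  ring

lemma resN_of_nonposint {i : ℕ} {k : ℤ} (hk : k ≤ 0) (h : α i = (k : ℂ)) : resN α i := by
  refine ⟨(-k).toNat, ?_⟩
  rw [h]
  have h2 : ((-k).toNat : ℤ) = -k := Int.toNat_of_nonneg (by omega)
  have h3 : (((-k).toNat : ℕ) : ℂ) = -(k : ℂ) := by
    calc (((-k).toNat : ℕ) : ℂ) = ((((-k).toNat : ℕ) : ℤ) : ℂ) := by push_cast; ring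
    _ = ((-k : ℤ) : ℂ) := by rw [h2]
    _ = -(k : ℂ) := by push_cast; ring
  rw [h3]
  ring

lemma nabla_mem_V1 (N : ℕ) {f : RatFunc ℂ} (hf : f ∈ V0 m x α N) :
    nablaDualFD m x α f ∈ V1 m x α N := by
  obtain ⟨A, hA, rfl⟩ := hf
  rw [SetLike.mem_coe, Polynomial.mem_degreeLT] at hA
  rw [nabla_PhiL]
  rcases eq_or_ne A 0 with rfl | hA0
  · have : TT m x α (bN m α N) 0 = 0 := by
      unfold TT
      simp
    rw [this, map_zero]
    exact Submodule.zero_mem _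
  have hdeg : (A.natDegree : ℤ) ≤ DD m (bN m α N) (eN m α N) := by
    have h1 : A.natDegree < (DD m (bN m α N) (eN m α N) + 1).toNat := by
      rwa [← Polynomial.natDegree_lt_iff_degree_lt hA0] at hA
    omega
  set T := TT m x α (bN m α N) A with hT
  rcases eq_or_ne T 0 with hT0 | hT0
  · rw [hT0, map_zero]; exact Submodule.zero_mem _
  refine Submodule.mem_map.2 ⟨T, ?_, rfl⟩
  rw [Polynomial.mem_degreeLT, ← Polynomial.natDegree_lt_iff_degree_lt hT0]
  have hTd : T.natDegree ≤ A.natDegree + m + 1 := (TT_coeff_top m x α _ hA0).1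
  rw [DD_shift]
  omega

lemma injectivity
    (hxd : ∀ i ∈ Finset.range (m + 2), ∀ j ∈ Finset.range (m + 2), i ≠ j → x i ≠ x j)
    (hsum : ∑ i ∈ Finset.range (m + 3), α i = 0) :
    ∀ f ∈ OmegaRel0Dual m x α, nablaDualFD m x α f = 0 → f = 0 := by
  intro f hf hnab
  by_contra hf0
  obtain ⟨N, -, hfV⟩ := Omega0_subset m x α hxd hf 0
  obtain ⟨A, hA, rfl⟩ := hfV
  have hA0 : A ≠ 0 := by
    rintro rfl
    exact hf0 (map_zero _)
  set b := bN m α N with hb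
  have hTT0 : TT m x α b A = 0 := by
    have h1 : PhiL m x (fun i => b i - 1) (TT m x α b A) = 0 := by
      rw [← nabla_PhiL]; exact hnab
    have h2 : PhiL m x (fun i => b i - 1) (TT m x α b A) =
        PhiL m x (fun i => b i - 1) 0 := by rw [h1, map_zero]
    exact PhiL_inj m x _ h2
  set k : ℕ → ℤ := fun i => (A.rootMultiplicity (x i) : ℤ) + b i with hk
  have hkι : ∀ i : ℕ, ((k i : ℤ) : ℂ) = (A.rootMultiplicity (x i) : ℂ) + ((b i : ℤ) : ℂ) := by
    intro i
    simp only [hk]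
    push_cast
    ring
  have hαi : ∀ i ∈ Finset.range (m + 2), α i = ((k i : ℤ) : ℂ) := by
    intro i hi
    by_contra hne
    have hne' : α i ≠ (A.rootMultiplicity (x i) : ℂ) + ((b i : ℤ) : ℂ) := by
      rw [← hkι i]; exact hne
    exact (TT_factor m x α hxd b hi hA0 hne').1 hTT0
  have hγ : (A.natDegree : ℂ) = ∑ i ∈ Finset.range (m + 2), (α i - (b i : ℂ)) := by
    by_contra hne
    have h2 := (TT_coeff_top m x α b hA0).2
    rw [hTT0] at h2
    simp only [Polynomial.coeff_zero] at h2
    exact (mul_ne_zero (Polynomial.leadingCoeff_ne_zero.2 hA0) (sub_ne_zero.2 hne)) h2.symm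
  have hαsum : α (m + 2) = ((-(∑ i ∈ Finset.range (m + 2), k i) : ℤ) : ℂ) := by
    have h1 : ∑ i ∈ Finset.range (m + 3), α i =
        (∑ i ∈ Finset.range (m + 2), α i) + α (m + 2) := Finset.sum_range_succ _ _
    have h2 : ∑ i ∈ Finset.range (m + 2), α i =
        ((∑ i ∈ Finset.range (m + 2), k i : ℤ) : ℂ) := by
      rw [Int.cast_sum]
      exact Finset.sum_congr rfl hαi
    rw [h1, h2] at hsum
    push_cast at hsum ⊢
    linear_combination hsum
  obtain ⟨hnp, hres0, hres1, hres2⟩ := hf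
  have hfne : PhiL m x b A ≠ 0 := PhiL_ne m x b hA0
  have hc1 : ∀ i ∈ Finset.range (m + 1), 0 ≤ k i := by
    intro i hi
    by_contra hneg
    push_neg at hneg
    have hi2 : i ∈ Finset.range (m + 2) := by simp at hi ⊢; omega
    have hle : i ≤ m := by simp at hi; omega
    obtain ⟨n, hn⟩ := res0_of_negint α (k := k i) (by omega) (hαi i hi2)
    rcases hres0 i hle n hn with h | h
    · exact hf0 h
    · rw [ordAt_PhiL m x hxd b hA0 hi2] at h
      have hkn : k i = -(n : ℤ) - 1 := by
        have hcc : ((k i : ℤ) : ℂ) = ((-(n : ℤ) - 1 : ℤ) : ℂ) := by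
          rw [← hαi i hi2, hn]; push_cast; ring
        exact_mod_cast hcc
      have hki : k i = (A.rootMultiplicity (x i) : ℤ) + b i := by simp only [hk]
      omega
  have hc2 : 1 ≤ k (m + 1) := by
    by_contra hneg
    push_neg at hneg
    have hi2 : (m + 1) ∈ Finset.range (m + 2) := by simp
    obtain ⟨n, hn⟩ := resN_of_nonposint α (k := k (m + 1)) (by omega) (hαi (m + 1) hi2)
    rcases hres1 n hn with h | h
    · exact hf0 h
    · rw [ordAt_PhiL m x hxd b hA0 hi2] at h
      have hkn : k (m + 1) = -(n : ℤ) := by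
        have hcc : ((k (m + 1) : ℤ) : ℂ) = ((-(n : ℤ) : ℤ) : ℂ) := by
          rw [← hαi (m + 1) hi2, hn]; push_cast; ring
        exact_mod_cast hcc
      have hki : k (m + 1) = (A.rootMultiplicity (x (m + 1)) : ℤ) + b (m + 1) := by
        simp only [hk]
      omega
  have hsum_rm : (∑ i ∈ Finset.range (m + 2), (A.rootMultiplicity (x i) : ℤ)) =
      (A.natDegree : ℤ) := by
    have hcc : ((∑ i ∈ Finset.range (m + 2), (A.rootMultiplicity (x i) : ℤ) : ℤ) : ℂ) =
        ((A.natDegree : ℤ) : ℂ) := by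
      rw [Int.cast_sum]
      push_cast
      rw [hγ]
      apply Finset.sum_congr rfl
      intro i hi
      linear_combination -(hαi i hi) - (hkι i)
    exact_mod_cast hcc
  have hkinf : -(∑ i ∈ Finset.range (m + 2), k i) = -(PhiL m x b A).intDegree := by
    rw [intDeg_PhiL m x b hA0]
    have hsplit2 : ∑ i ∈ Finset.range (m + 2), k i =
        (∑ i ∈ Finset.range (m + 2), (A.rootMultiplicity (x i) : ℤ)) +
          ∑ i ∈ Finset.range (m + 2), b i := by
      simp only [hk]
      rw [← Finset.sum_add_distrib]
    rw [hsplit2, hsum_rm]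
  have hc3 : 1 ≤ -(∑ i ∈ Finset.range (m + 2), k i) := by
    by_contra hneg
    push_neg at hneg
    obtain ⟨n, hn⟩ := resN_of_nonposint α (k := -(∑ i ∈ Finset.range (m + 2), k i))
      (by omega) hαsum
    rcases (ordInfGE_iff _ _).1 (hres2 n hn) with h | h
    · exact hf0 h
    · have hkn : -(∑ i ∈ Finset.range (m + 2), k i) = -(n : ℤ) := by
        have hcc : ((-(∑ i ∈ Finset.range (m + 2), k i) : ℤ) : ℂ) = ((-(n : ℤ) : ℤ) : ℂ) := by
          rw [← hαsum, hn]; push_cast; ring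
        exact_mod_cast hcc
      omega
  have hsplit : ∑ i ∈ Finset.range (m + 2), k i =
      (∑ i ∈ Finset.range (m + 1), k i) + k (m + 1) := Finset.sum_range_succ _ _
  have hge : 0 ≤ ∑ i ∈ Finset.range (m + 1), k i := Finset.sum_nonneg hc1
  omega

end Main6
end RD


namespace RD
section Main7

local notation "ι" => algebraMap (Polynomial ℂ) (RatFunc ℂ)

variable (m : ℕ) (x α : ℕ → ℂ)

lemma strictness
    (hxd : ∀ i ∈ Finset.range (m + 2), ∀ j ∈ Finset.range (m + 2), i ≠ j → x i ≠ x j)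
    (hsum : ∑ i ∈ Finset.range (m + 3), α i = 0)
    {f : RatFunc ℂ} (hf : f ∈ OmegaRel0Dual m x α) {N : ℕ}
    (hg : nablaDualFD m x α f ∈ V1 m x α N) : f ∈ V0 m x α N := by
  rcases eq_or_ne f 0 with rfl | hf0
  · exact Submodule.zero_mem _
  obtain ⟨M, hMN, hfV⟩ := Omega0_subset m x α hxd hf N
  obtain ⟨hnp, hres0, hres1, hres2⟩ := hf
  obtain ⟨A, hA, rfl⟩ := hfV
  have hA0 : A ≠ 0 := by rintro rfl; exact hf0 (map_zero _)
  set bM := bN m α M with hbM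
  set f := PhiL m x bM A with hfdef
  have hfne : f ≠ 0 := hf0
  -- facts about the image
  have hnab : nablaDualFD m x α f = PhiL m x (fun i => bM i - 1) (TT m x α bM A) :=
    nabla_PhiL m x α bM A
  rw [V1, mem_Vsp_iff m x hxd] at hg
  rw [V0, mem_Vsp_iff m x hxd]
  right
  refine ⟨?_, ?_, ?_⟩
  · -- bounds at the marked points
    intro i hi
    have hordf : ordAt f (x i) = (A.rootMultiplicity (x i) : ℤ) + bM i :=
      ordAt_PhiL m x hxd bM hA0 hi
    by_cases him : i = m + 1
    · subst him
      by_cases hr : resN α (m + 1)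
      · obtain ⟨n, hn⟩ := hr
        rw [bN_resN1 m α hn]
        rcases hres1 n hn with h | h
        · exact absurd h hf0
        · exact h
      · rw [bN_nonresN1 m α hr]
        by_contra hlt
        push_neg at hlt
        have hne' : α (m + 1) ≠ (A.rootMultiplicity (x (m + 1)) : ℂ) + ((bM (m + 1) : ℤ) : ℂ) := by
          intro hcontra
          apply hr
          apply resN_of_nonposint α
            (k := (A.rootMultiplicity (x (m + 1)) : ℤ) + bM (m + 1)) (by omega)
          rw [hcontra]; push_cast; ring
        obtain ⟨hTT0, hrm⟩ := TT_factor m x α hxd bM hi hA0 hne'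
        have hnab0 : nablaDualFD m x α f ≠ 0 := by
          rw [hnab]; exact PhiL_ne m x _ hTT0
        rcases hg with h0 | ⟨hg1, -, -⟩
        · exact hnab0 h0
        have := hg1 (m + 1) hi
        rw [hnab, ordAt_PhiL m x hxd _ hTT0 hi, hrm] at this
        rw [bN_nonresN1 m α hr] at this
        omega
    · have hle : i ≤ m := by simp at hi; omega
      by_cases hr : res0 α i
      · obtain ⟨n, hn⟩ := hr
        rw [bN_res0 m α hle hn]
        rcases hres0 i hle n hn with h | h
        · exact absurd h hf0
        · exact h
      · rw [bN_nonres0 m α hle hr]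
        by_contra hlt
        push_neg at hlt
        have hne' : α i ≠ (A.rootMultiplicity (x i) : ℂ) + ((bM i : ℤ) : ℂ) := by
          intro hcontra
          apply hr
          apply res0_of_negint α (k := (A.rootMultiplicity (x i) : ℤ) + bM i) (by omega)
          rw [hcontra]; push_cast; ring
        obtain ⟨hTT0, hrm⟩ := TT_factor m x α hxd bM hi hA0 hne'
        have hnab0 : nablaDualFD m x α f ≠ 0 := by
          rw [hnab]; exact PhiL_ne m x _ hTT0
        rcases hg with h0 | ⟨hg1, -, -⟩
        · exact hnab0 h0
        have := hg1 i hi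
        rw [hnab, ordAt_PhiL m x hxd _ hTT0 hi, hrm] at this
        rw [bN_nonres0 m α hle hr] at this
        omega
  · intro p hp
    rcases hnp p (fun i hi => hp i (by simp; omega)) with h | h
    · exact absurd h hf0
    · exact h
  · have hintdeg : f.intDegree = (A.natDegree : ℤ) + ∑ i ∈ Finset.range (m + 2), bM i :=
      intDeg_PhiL m x bM hA0
    by_cases hr : resN α (m + 2)
    · obtain ⟨n, hn⟩ := hr
      rw [eN_res m α hn]
      rcases (ordInfGE_iff f _).1 (hres2 n hn) with h | h
      · exact absurd h hf0
      · omega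
    · rw [eN_nonres m α hr]
      by_contra hlt
      push_neg at hlt
      -- the top coefficient cannot vanish
      have hγne : (A.natDegree : ℂ) ≠ ∑ i ∈ Finset.range (m + 2), (α i - (bM i : ℂ)) := by
        intro hcontra
        apply hr
        apply resN_of_nonposint α
          (k := -((A.natDegree : ℤ) + ∑ i ∈ Finset.range (m + 2), bM i)) (by omega)
        have h1 : ∑ i ∈ Finset.range (m + 3), α i =
            (∑ i ∈ Finset.range (m + 2), α i) + α (m + 2) := Finset.sum_range_succ _ _
        have h2 : ∑ i ∈ Finset.range (m + 2), α i =
            (A.natDegree : ℂ) + ((∑ i ∈ Finset.range (m + 2), bM i : ℤ) : ℂ) := by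
          rw [Int.cast_sum]
          have h3 : ∑ i ∈ Finset.range (m + 2), α i =
              (∑ i ∈ Finset.range (m + 2), (α i - (bM i : ℂ))) +
                ∑ i ∈ Finset.range (m + 2), ((bM i : ℤ) : ℂ) := by
            rw [← Finset.sum_add_distrib]
            apply Finset.sum_congr rfl
            intro i _
            ring
          rw [h3, ← hcontra]
        rw [h1, h2] at hsum
        push_cast at hsum ⊢
        linear_combination hsum
      obtain ⟨hTTdeg, hTTcoeff⟩ := TT_coeff_top m x α bM hA0
      have hcne : (TT m x α bM A).coeff (A.natDegree + m + 1) ≠ 0 := by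
        rw [hTTcoeff]
        exact mul_ne_zero (Polynomial.leadingCoeff_ne_zero.2 hA0) (sub_ne_zero.2 hγne)
      have hTT0 : TT m x α bM A ≠ 0 := fun h => hcne (by rw [h]; simp)
      have hTTdeg' : (TT m x α bM A).natDegree = A.natDegree + m + 1 :=
        le_antisymm hTTdeg (Polynomial.le_natDegree_of_ne_zero hcne)
      have hnab0 : nablaDualFD m x α f ≠ 0 := by
        rw [hnab]; exact PhiL_ne m x _ hTT0
      rcases hg with h0 | ⟨-, -, hg3⟩
      · exact hnab0 h0
      rw [hnab, intDeg_PhiL m x _ hTT0, hTTdeg', sum_sub_one] at hg3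
      rw [eN_nonres m α hr] at hg3
      omega

end Main7
end RD


namespace RD
section Main8

local notation "ι" => algebraMap (Polynomial ℂ) (RatFunc ℂ)

variable (m : ℕ) (x α : ℕ → ℂ)

lemma finiteDimensional_degreeLT (n : ℕ) :
    FiniteDimensional ℂ (Polynomial.degreeLT ℂ n) :=
  Module.Finite.equiv (Polynomial.degreeLTEquiv ℂ n).symm

lemma finrank_degreeLT (n : ℕ) :
    Module.finrank ℂ (Polynomial.degreeLT ℂ n) = n := by
  haveI := finiteDimensional_degreeLT n
  rw [LinearEquiv.finrank_eq (Polynomial.degreeLTEquiv ℂ n)]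
  exact Module.finrank_fin_fun ℂ

lemma finiteDimensional_Vsp (b : ℕ → ℤ) (e : ℤ) :
    FiniteDimensional ℂ (Vsp m x b e) := by
  haveI := finiteDimensional_degreeLT (DD m b e + 1).toNat
  rw [Vsp]
  exact Module.Finite.map _ _

lemma finrank_Vsp (b : ℕ → ℤ) (e : ℤ) :
    Module.finrank ℂ (Vsp m x b e) = (DD m b e + 1).toNat := by
  haveI := finiteDimensional_degreeLT (DD m b e + 1).toNat
  rw [Vsp, ← LinearEquiv.finrank_eq
    (Submodule.equivMapOfInjective (PhiL m x b) (PhiL_inj m x b)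
      (Polynomial.degreeLT ℂ (DD m b e + 1).toNat))]
  exact finrank_degreeLT _

noncomputable def DD0 (N : ℕ) : ℤ := DD m (bN m α N) (eN m α N)

lemma finrank_V0 (N : ℕ) : Module.finrank ℂ (V0 m x α N) = (DD0 m α N + 1).toNat :=
  finrank_Vsp m x _ _

lemma finrank_V1 (N : ℕ) :
    Module.finrank ℂ (V1 m x α N) = (DD0 m α N + (m + 1) + 1).toNat := by
  rw [V1, finrank_Vsp, DD_shift]
  rfl

lemma DD0_mono {N N' : ℕ} (h : N ≤ N') : DD0 m α N ≤ DD0 m α N' := by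
  unfold DD0 DD
  have h1 : ∑ i ∈ Finset.range (m + 2), bN m α N' i ≤ ∑ i ∈ Finset.range (m + 2), bN m α N i :=
    Finset.sum_le_sum fun i _ => bN_mono m α h i
  have h2 := eN_mono m α h
  omega

lemma nonres_exists (hsum : ∑ i ∈ Finset.range (m + 3), α i = 0) :
    (∃ i ≤ m, ¬res0 α i) ∨ ¬resN α (m + 1) ∨ ¬resN α (m + 2) := by
  by_contra hall
  push_neg at hall
  obtain ⟨h0, h1, h2⟩ := hall
  have hre := congrArg Complex.re hsum
  rw [Complex.re_sum] at hre
  have hsplit : ∑ i ∈ Finset.range (m + 3), (α i).re =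
      (∑ i ∈ Finset.range (m + 1), (α i).re) + (α (m + 1)).re + (α (m + 2)).re := by
    rw [Finset.sum_range_succ, Finset.sum_range_succ]
  have hb0 : ∀ i ∈ Finset.range (m + 1), (α i).re ≤ -1 := by
    intro i hi
    obtain ⟨n, hn⟩ := h0 i (by simp at hi; omega)
    rw [hn]
    simp only [Complex.sub_re, Complex.neg_re, Complex.natCast_re, Complex.one_re]
    have : (0 : ℝ) ≤ (n : ℝ) := Nat.cast_nonneg n
    linarith
  have hs0 : ∑ i ∈ Finset.range (m + 1), (α i).re ≤ -(m + 1 : ℝ) := by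
    calc ∑ i ∈ Finset.range (m + 1), (α i).re ≤ ∑ _i ∈ Finset.range (m + 1), (-1 : ℝ) :=
      Finset.sum_le_sum hb0
    _ = -(m + 1 : ℝ) := by rw [Finset.sum_const, Finset.card_range]; push_cast; ring
  have hb1 : (α (m + 1)).re ≤ 0 := by
    obtain ⟨n, hn⟩ := h1
    rw [hn]
    simp only [Complex.neg_re, Complex.natCast_re]
    have : (0 : ℝ) ≤ (n : ℝ) := Nat.cast_nonneg n
    linarith
  have hb2 : (α (m + 2)).re ≤ 0 := by
    obtain ⟨n, hn⟩ := h2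
    rw [hn]
    simp only [Complex.neg_re, Complex.natCast_re]
    have : (0 : ℝ) ≤ (n : ℝ) := Nat.cast_nonneg n
    linarith
  rw [hsplit] at hre
  simp only [Complex.zero_re] at hre
  have : (0 : ℝ) < (m : ℝ) + 1 := by positivity
  linarith

lemma DD0_step (hsum : ∑ i ∈ Finset.range (m + 3), α i = 0) (N : ℕ) :
    DD0 m α N + 1 ≤ DD0 m α (N + 1) := by
  have hbmono : ∀ i ∈ Finset.range (m + 2), bN m α (N + 1) i ≤ bN m α N i :=
    fun i _ => bN_mono m α (by omega) i
  have hemono : eN m α (N + 1) ≤ eN m α N := eN_mono m α (by omega)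
  unfold DD0 DD
  rcases nonres_exists m α hsum with ⟨i0, hi0, hnr⟩ | hnr | hnr
  · have hmem : i0 ∈ Finset.range (m + 2) := by simp; omega
    have hlt : bN m α (N + 1) i0 < bN m α N i0 := by
      rw [bN_nonres0 m α hi0 hnr, bN_nonres0 m α hi0 hnr]
      omega
    have := Finset.sum_lt_sum hbmono ⟨i0, hmem, hlt⟩
    omega
  · have hmem : (m + 1) ∈ Finset.range (m + 2) := by simp
    have hlt : bN m α (N + 1) (m + 1) < bN m α N (m + 1) := by
      rw [bN_nonresN1 m α hnr, bN_nonresN1 m α hnr]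
      omega
    have := Finset.sum_lt_sum hbmono ⟨m + 1, hmem, hlt⟩
    omega
  · have h1 : ∑ i ∈ Finset.range (m + 2), bN m α (N + 1) i ≤
        ∑ i ∈ Finset.range (m + 2), bN m α N i := Finset.sum_le_sum hbmono
    rw [eN_nonres m α hnr, eN_nonres m α hnr]
    omega

lemma DD0_lower (hsum : ∑ i ∈ Finset.range (m + 3), α i = 0) :
    ∀ t : ℕ, DD0 m α 0 + t ≤ DD0 m α t := by
  intro t
  induction t with
  | zero => omega
  | succ s ih =>
    have := DD0_step m α hsum s
    omega

lemma exists_N0 (hsum : ∑ i ∈ Finset.range (m + 3), α i = 0) :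
    ∃ N0 : ℕ, ∀ N ≥ N0, 0 ≤ DD0 m α N := by
  refine ⟨(-(DD0 m α 0)).toNat, ?_⟩
  intro N hN
  have h1 := DD0_lower m α hsum (-(DD0 m α 0)).toNat
  have h2 := DD0_mono m α hN
  omega

lemma finrank_map_nabla
    (hxd : ∀ i ∈ Finset.range (m + 2), ∀ j ∈ Finset.range (m + 2), i ≠ j → x i ≠ x j)
    (hsum : ∑ i ∈ Finset.range (m + 3), α i = 0) (N : ℕ) :
    Module.finrank ℂ (Submodule.map (nablaL m x α) (V0 m x α N)) =
      Module.finrank ℂ (V0 m x α N) := by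
  haveI : FiniteDimensional ℂ (V0 m x α N) := finiteDimensional_Vsp m x _ _
  set g := (nablaL m x α).comp (V0 m x α N).subtype with hg
  have hrange : LinearMap.range g = Submodule.map (nablaL m x α) (V0 m x α N) := by
    rw [hg, LinearMap.range_comp, Submodule.range_subtype]
  have hker : LinearMap.ker g = ⊥ := by
    rw [Submodule.eq_bot_iff]
    rintro ⟨v, hv⟩ hmem
    rw [LinearMap.mem_ker, hg, LinearMap.comp_apply] at hmem
    have hv0 : v = 0 :=
      injectivity m x α hxd hsum v (V0_subset_Omega0 m x α hxd N hv) hmem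
    exact Subtype.ext hv0
  rw [← hrange]
  exact LinearMap.finrank_range_of_inj (LinearMap.ker_eq_bot.1 hker)

end Main8
end RD


/-- the kernel of `∇_t^∨ : Ω^0(T^∨,D^∨;L^∨) → Ω^1(T^∨,D^∨;L^∨)`
vanishes, and `H^1_alg(T^∨,D^∨;L^∨) = Ω^1(T^∨,D^∨;L^∨)/∇_t^∨(Ω^0(T^∨,D^∨;L^∨))`
has dimension exactly `m+1`, for all parameters `α`.  The dimension statement
is expressed by the existence of a basis of the quotient of size `m+1`. -/
theorem dual_H0_vanishes_and_dim_H1_dual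
    (m : ℕ) (hm : 1 ≤ m) (x α : ℕ → ℂ)
    (hx0 : x 0 = 0) (hx1 : x (m + 1) = 1)
    (hxdist : ∀ i ≤ m + 1, ∀ j ≤ m + 1, i ≠ j → x i ≠ x j)
    (hsum : ∑ i ∈ Finset.range (m + 3), α i = 0) :
    (∀ f ∈ OmegaRel0Dual m x α, nablaDualFD m x α f = 0 → f = 0) ∧
    (∃ g : Fin (m + 1) → RatFunc ℂ,
      (∀ i, g i ∈ OmegaRel1Dual m x α) ∧
      (∀ h ∈ OmegaRel1Dual m x α, ∃ c : Fin (m + 1) → ℂ,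
        ∃ f ∈ OmegaRel0Dual m x α,
        h = (∑ i, c i • g i) + nablaDualFD m x α f) ∧
      (∀ c : Fin (m + 1) → ℂ, ∀ f ∈ OmegaRel0Dual m x α,
        (∑ i, c i • g i) = nablaDualFD m x α f → c = 0)) := by
  classical
  have hxd : ∀ i ∈ Finset.range (m + 2), ∀ j ∈ Finset.range (m + 2), i ≠ j → x i ≠ x j := by
    intro i hi j hj hij
    exact hxdist i (by simp at hi; omega) j (by simp at hj; omega) hij
  constructor
  · exact RD.injectivity m x α hxd hsum
  obtain ⟨N0, hN0⟩ := RD.exists_N0 m α hsum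
  haveI hfd0 : ∀ N, FiniteDimensional ℂ (RD.V0 m x α N) :=
    fun N => RD.finiteDimensional_Vsp m x _ _
  haveI hfd1 : ∀ N, FiniteDimensional ℂ (RD.V1 m x α N) :=
    fun N => RD.finiteDimensional_Vsp m x _ _
  set W1 := RD.V1 m x α N0 with hW1
  set U0 := Submodule.map (RD.nablaL m x α) (RD.V0 m x α N0) with hU0
  have hU0le : U0 ≤ W1 := by
    rintro v ⟨f, hf, rfl⟩
    exact RD.nabla_mem_V1 m x α N0 hf
  haveI : FiniteDimensional ℂ W1 := hfd1 N0
  haveI : FiniteDimensional ℂ (RD.V0 m x α N0) := hfd0 N0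
  haveI : FiniteDimensional ℂ U0 := Module.Finite.map _ _
  set U0' := U0.comap W1.subtype with hU0'
  obtain ⟨C', hcompl⟩ := Submodule.exists_isCompl U0'
  haveI : FiniteDimensional ℂ C' := FiniteDimensional.finiteDimensional_submodule C'
  set Cc := C'.map W1.subtype with hCc
  haveI : FiniteDimensional ℂ Cc := Module.Finite.map _ _
  have hCcle : Cc ≤ W1 := Submodule.map_subtype_le W1 C'
  have hCcinfU0 : Cc ⊓ U0 = ⊥ := by
    rw [Submodule.eq_bot_iff]
    rintro v ⟨hvC, hvU⟩
    obtain ⟨w, hw, rfl⟩ := hvC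
    have hw' : w ∈ U0' := by
      rw [hU0']
      exact Submodule.mem_comap.2 hvU
    have hmem : w ∈ U0' ⊓ C' := ⟨hw', hw⟩
    rw [hcompl.inf_eq_bot] at hmem
    rw [hmem]
    rfl
  have hCcsup : Cc ⊔ U0 = W1 := by
    have h1 : C' ⊔ U0' = ⊤ := by rw [sup_comm]; exact hcompl.sup_eq_top
    have h2 : Submodule.map W1.subtype U0' = U0 := by
      rw [hU0', Submodule.map_comap_subtype]
      exact inf_eq_right.2 hU0le
    rw [hCc, ← h2, ← Submodule.map_sup, h1, Submodule.map_subtype_top]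
  have hrkW1 : Module.finrank ℂ W1 = (RD.DD0 m α N0 + (m + 1) + 1).toNat :=
    RD.finrank_V1 m x α N0
  have hrkU0 : Module.finrank ℂ U0 = (RD.DD0 m α N0 + 1).toNat := by
    rw [hU0, RD.finrank_map_nabla m x α hxd hsum N0, RD.finrank_V0]
  have hDD0 : 0 ≤ RD.DD0 m α N0 := hN0 N0 le_rfl
  have hrkCc : Module.finrank ℂ Cc = m + 1 := by
    have h3 := Submodule.finrank_sup_add_finrank_inf_eq Cc U0
    rw [hCcsup, hCcinfU0, finrank_bot, hrkW1, hrkU0] at h3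
    omega
  let bb : Module.Basis (Fin (m + 1)) ℂ Cc := Module.finBasisOfFinrankEq ℂ Cc hrkCc
  set g : Fin (m + 1) → RatFunc ℂ := fun i => ((bb i : Cc) : RatFunc ℂ) with hgdef
  have hgmem : ∀ i, g i ∈ Cc := fun i => (bb i).2
  have hinfN : ∀ N, Cc ⊓ Submodule.map (RD.nablaL m x α) (RD.V0 m x α N) = ⊥ := by
    intro N
    rw [Submodule.eq_bot_iff]
    rintro v ⟨hvC, f, hf, rfl⟩
    have hfΩ : f ∈ OmegaRel0Dual m x α := RD.V0_subset_Omega0 m x α hxd N hf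
    have hnabmem : nablaDualFD m x α f ∈ RD.V1 m x α N0 := hCcle hvC
    have hfV0 : f ∈ RD.V0 m x α N0 := RD.strictness m x α hxd hsum hfΩ hnabmem
    have hmem2 : RD.nablaL m x α f ∈ Cc ⊓ U0 := ⟨hvC, ⟨f, hfV0, rfl⟩⟩
    rw [hCcinfU0] at hmem2
    exact hmem2
  have hsupN : ∀ N, N0 ≤ N → Cc ⊔ Submodule.map (RD.nablaL m x α) (RD.V0 m x α N) =
      RD.V1 m x α N := by
    intro N hN
    haveI : FiniteDimensional ℂ (RD.V0 m x α N) := hfd0 N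
    haveI : FiniteDimensional ℂ (RD.V1 m x α N) := hfd1 N
    haveI : FiniteDimensional ℂ (Submodule.map (RD.nablaL m x α) (RD.V0 m x α N)) :=
      Module.Finite.map _ _
    have hle : Cc ⊔ Submodule.map (RD.nablaL m x α) (RD.V0 m x α N) ≤ RD.V1 m x α N := by
      apply sup_le
      · exact le_trans hCcle (RD.V1_mono m x α hxd hN)
      · rintro v ⟨f, hf, rfl⟩
        exact RD.nabla_mem_V1 m x α N hf
    have h3 := Submodule.finrank_sup_add_finrank_inf_eq Cc
      (Submodule.map (RD.nablaL m x α) (RD.V0 m x α N))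
    rw [hinfN N, finrank_bot, hrkCc, RD.finrank_map_nabla m x α hxd hsum N,
      RD.finrank_V0] at h3
    have h4 : Module.finrank ℂ (RD.V1 m x α N) = (RD.DD0 m α N + (m + 1) + 1).toNat :=
      RD.finrank_V1 m x α N
    have hDDN : 0 ≤ RD.DD0 m α N := hN0 N hN
    exact Submodule.eq_of_le_of_finrank_le hle (by omega)
  have hcoesum : ∀ (w : Cc) (c : Fin (m + 1) → ℂ),
      ((∑ i, c i • bb i : Cc) : RatFunc ℂ) = ∑ i, c i • g i := by
    intro w c
    simp only [AddSubmonoidClass.coe_finset_sum, SetLike.val_smul, hgdef]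
  refine ⟨g, ?_, ?_, ?_⟩
  · intro i
    exact RD.V1_subset_Omega1 m x α hxd N0 (hCcle (hgmem i))
  · intro h hh
    obtain ⟨N, hN, hhV⟩ := RD.Omega1_subset m x α hxd hh N0
    rw [← hsupN N hN] at hhV
    obtain ⟨v, hv, u, hu, hvu⟩ := Submodule.mem_sup.1 hhV
    obtain ⟨f, hf, rfl⟩ := hu
    refine ⟨fun i => bb.repr ⟨v, hv⟩ i, f, RD.V0_subset_Omega0 m x α hxd N hf, ?_⟩
    have hv' : (∑ i, bb.repr ⟨v, hv⟩ i • bb i : Cc) = ⟨v, hv⟩ := bb.sum_repr ⟨v, hv⟩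
    have hveq : v = ∑ i, bb.repr ⟨v, hv⟩ i • g i := by
      rw [← hcoesum ⟨v, hv⟩ (fun i => bb.repr ⟨v, hv⟩ i), hv']
    rw [← hvu]
    show v + RD.nablaL m x α f = (∑ i, bb.repr ⟨v, hv⟩ i • g i) + nablaDualFD m x α f
    rw [← hveq]
    rfl
  · intro c f hfΩ heq
    set v := ∑ i, c i • g i with hvdef
    have hvC : v ∈ Cc := Submodule.sum_mem _ (fun i _ => Submodule.smul_mem _ _ (hgmem i))
    obtain ⟨N, hN, hfV⟩ := RD.Omega0_subset m x α hxd hfΩ N0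
    have hvU : v ∈ Submodule.map (RD.nablaL m x α) (RD.V0 m x α N) := ⟨f, hfV, heq.symm⟩
    have hv0 : v = 0 := by
      have := hinfN N
      rw [Submodule.eq_bot_iff] at this
      exact this v ⟨hvC, hvU⟩
    have h5 : ((∑ i, c i • bb i : Cc) : RatFunc ℂ) = ((0 : Cc) : RatFunc ℂ) := by
      rw [hcoesum 0 c, ← hvdef, hv0, ZeroMemClass.coe_zero]
    have hsum0 : (∑ i, c i • bb i : Cc) = 0 := Subtype.coe_injective h5
    have hci := Fintype.linearIndependent_iff.1 bb.linearIndependent c hsum0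
    funext i
    exact hci i

end
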